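/- arXiv:0911.0696 — 6 statements merged into one kernel-verified Lean document; each statement's English description precedes it below -/
import Mathlib

section
/- Let A be an M × N real matrix with nonnegative entries, where M < N. For each subset S of {1,...,N} of cardinality M, let A_S denote the M × M submatrix of A consisting of the columns indexed by S. Define the multilinear homogeneous polynomial F_A(λ_1,...,λ_N) = Σ_{S ⊆ {1,...,N}, |S| = M} per(A_S) · Π_{j ∈ S} λ_j, where per denotes the permanent. Then the function log ∘ F_A is concave on the nonnegative orthant ℝ_{≥0}^N. -/
/-- The permanent of a square real matrix. -/
noncomputable def permanent {n : ℕ} (B : Matrix (Fin n) (Fin n) ℝ) : ℝ :=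
  ∑ σ : Equiv.Perm (Fin n), ∏ i, B i (σ i)

/-- The polynomial `F_A(λ) = Σ_{|S| = M} per(A_S) Π_{j ∈ S} λ_j`, as a real function. -/
noncomputable def FA {M N : ℕ} (A : Matrix (Fin M) (Fin N) ℝ) (lam : Fin N → ℝ) : ℝ :=
  ∑ S ∈ (Finset.powersetCard M (Finset.univ : Finset (Fin N))).attach,
    permanent (Matrix.of fun i k =>
      A i ((S.1.orderIsoOfFin ((Finset.mem_powersetCard.mp S.2).2)) k)) *
      ∏ j ∈ S.1, lam j

/-- Extended-real logarithm, with `log r = -∞` for `r ≤ 0`. -/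
noncomputable def elog (r : ℝ) : EReal := if 0 < r then ((Real.log r : ℝ) : EReal) else ⊥


private def cnt {M N : ℕ} (f : Fin M → Fin N) (j : Fin N) : ℕ :=
  (Finset.univ.filter (fun i => f i = j)).card

private def Dfin (M : ℕ) {N : ℕ} (U V : Finset (Fin N)) : Finset (Fin M → Fin N) :=
  Finset.univ.filter (fun f => (∀ i, f i ∈ U) ∧ ∀ j ∈ V, cnt f j ≤ 1)

private noncomputable def Phi {M N : ℕ} (A : Matrix (Fin M) (Fin N) ℝ)
    (U V : Finset (Fin N)) (l : Fin N → ℂ) : ℂ :=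
  ∑ f ∈ Dfin M U V, ∏ i, (A i (f i) : ℂ) * l (f i)

private lemma mem_Dfin {M N : ℕ} {U V : Finset (Fin N)} {f : Fin M → Fin N} :
    f ∈ Dfin M U V ↔ (∀ i, f i ∈ U) ∧ ∀ j ∈ V, cnt f j ≤ 1 := by
  simp [Dfin]

private lemma cnt_eq_zero {M N : ℕ} {f : Fin M → Fin N} {j : Fin N} :
    cnt f j = 0 ↔ ∀ i, f i ≠ j := by
  simp [cnt, Finset.card_eq_zero, Finset.filter_eq_empty_iff]

private lemma cnt_le_one_of_injective {M N : ℕ} {f : Fin M → Fin N}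
    (hf : Function.Injective f) (j : Fin N) : cnt f j ≤ 1 := by
  rw [cnt, Finset.card_le_one]
  intro a ha b hb
  simp only [Finset.mem_filter] at ha hb
  exact hf (ha.2.trans hb.2.symm)

private lemma inj_of_cnt {M N : ℕ} {f : Fin M → Fin N}
    (h : ∀ j, cnt f j ≤ 1) : Function.Injective f := by
  intro a b hab
  have := h (f b)
  rw [cnt, Finset.card_le_one] at this
  exact this a (by simp [hab]) b (by simp)

private lemma prod_split {M N : ℕ} (A : Matrix (Fin M) (Fin N) ℝ) (l : Fin N → ℂ)
    (j : Fin N) (f : Fin M → Fin N) (w : ℂ) :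
    (∏ i, (A i (f i) : ℂ) * (if f i = j then w else l (f i)))
      = (∏ i, (A i (f i) : ℂ) * (if f i = j then 1 else l (f i))) * w ^ cnt f j := by
  have h1 : ∀ i, (A i (f i) : ℂ) * (if f i = j then w else l (f i)) =
      ((A i (f i) : ℂ) * (if f i = j then 1 else l (f i))) * (if f i = j then w else 1) := by
    intro i
    by_cases h : f i = j <;> simp [h]
  rw [Finset.prod_congr rfl (fun i _ => h1 i), Finset.prod_mul_distrib]
  congr 1
  rw [← Finset.prod_filter, Finset.prod_const, cnt]

open Polynomial in
private lemma coeffs_of_roots (s : Multiset ℂ) (hs : ∀ r ∈ s, r ≠ 0 ∧ r.im ≤ 0) :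
    (s.map (fun a => X - C a)).prod.coeff 0 ≠ 0 ∧
      (((s.map (fun a => X - C a)).prod.coeff 1) / ((s.map (fun a => X - C a)).prod.coeff 0)).im ≤ 0 := by
  induction s using Multiset.induction with
  | empty => simp [Polynomial.coeff_one]
  | cons r s ih =>
    obtain ⟨hr0, hrim⟩ := hs r (Multiset.mem_cons_self r s)
    obtain ⟨hc0, him⟩ := ih (fun a ha => hs a (Multiset.mem_cons_of_mem ha))
    set p := (s.map (fun a => X - C a)).prod with hp
    have hprod : ((r ::ₘ s).map (fun a => X - C a)).prod = (X - C r) * p := by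
      rw [Multiset.map_cons, Multiset.prod_cons]
    rw [hprod]
    have e0 : ((X - C r) * p).coeff 0 = -r * p.coeff 0 := by
      rw [sub_mul, Polynomial.coeff_sub, Polynomial.coeff_C_mul]
      simp [Polynomial.coeff_X_mul]
    have e1 : ((X - C r) * p).coeff 1 = p.coeff 0 - r * p.coeff 1 := by
      rw [sub_mul, Polynomial.coeff_sub, Polynomial.coeff_C_mul, Polynomial.coeff_X_mul]
    rw [e0, e1]
    constructor
    · exact mul_ne_zero (neg_ne_zero.mpr hr0) hc0
    · have hratio : (p.coeff 0 - r * p.coeff 1) / (-r * p.coeff 0) =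
          -r⁻¹ + p.coeff 1 / p.coeff 0 := by
        field_simp
        ring
      rw [hratio, Complex.add_im]
      have : (-r⁻¹).im = r.im / Complex.normSq r := by
        rw [Complex.neg_im, Complex.inv_im]; ring
      have h1 : (-r⁻¹).im ≤ 0 := by
        rw [this]
        apply div_nonpos_of_nonpos_of_nonneg hrim (Complex.normSq_nonneg r)
      linarith

open Polynomial in
private lemma lemU (f : Polynomial ℂ) (h0 : f.coeff 0 ≠ 0)
    (hH : ∀ z : ℂ, 0 < z.im → f.eval z ≠ 0) (w : ℂ) (hw : 0 < w.im) :
    f.coeff 0 + w * f.coeff 1 ≠ 0 := by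
  have hf : f ≠ 0 := fun h => h0 (by simp [h])
  have hcard : Multiset.card f.roots = f.natDegree :=
    (Polynomial.splits_iff_card_roots).mp (IsAlgClosed.splits f)
  have hfac := Polynomial.C_leadingCoeff_mul_prod_multiset_X_sub_C hcard
  set p := (f.roots.map (fun a => X - C a)).prod with hp
  have hroots : ∀ r ∈ f.roots, r ≠ 0 ∧ r.im ≤ 0 := by
    intro r hr
    have hroot : f.IsRoot r := (Polynomial.mem_roots'.mp hr).2
    constructor
    · rintro rfl
      rw [Polynomial.IsRoot, ← Polynomial.coeff_zero_eq_eval_zero] at hroot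
      exact h0 hroot
    · by_contra h
      exact hH r (lt_of_not_ge h) hroot
  obtain ⟨hc0, him⟩ := coeffs_of_roots f.roots hroots
  have hlead : f.leadingCoeff ≠ 0 := Polynomial.leadingCoeff_ne_zero.mpr hf
  have e0 : f.coeff 0 = f.leadingCoeff * p.coeff 0 := by
    conv_lhs => rw [← hfac]
    rw [Polynomial.coeff_C_mul]
  have e1 : f.coeff 1 = f.leadingCoeff * p.coeff 1 := by
    conv_lhs => rw [← hfac]
    rw [Polynomial.coeff_C_mul]
  rw [e0, e1]
  set ζ := p.coeff 1 / p.coeff 0 with hζ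
  have key : f.leadingCoeff * p.coeff 0 + w * (f.leadingCoeff * p.coeff 1) =
      f.leadingCoeff * p.coeff 0 * (1 + w * ζ) := by
    field_simp [hζ]
    have hz : ζ * p.coeff 0 = p.coeff 1 := by rw [hζ]; exact div_mul_cancel₀ _ hc0
    linear_combination (-w) * hz
  rw [key]
  apply mul_ne_zero (mul_ne_zero hlead hc0)
  intro h
  have hζ0 : ζ ≠ 0 := by
    intro h'
    rw [h'] at h
    simp at h
  have hwval : w = -ζ⁻¹ := by
    field_simp at h ⊢
    linear_combination h
  rw [hwval] at hw
  have : (-ζ⁻¹).im = ζ.im / Complex.normSq ζ := by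
    rw [Complex.neg_im, Complex.inv_im]; ring
  rw [this] at hw
  have := div_nonpos_of_nonpos_of_nonneg him (Complex.normSq_nonneg ζ)
  linarith

private theorem stab {M N : ℕ} (A : Matrix (Fin M) (Fin N) ℝ) (hA : ∀ i j, 0 < A i j) :
    ∀ (k : ℕ) (U V : Finset (Fin N)), U.card + V.card ≤ k → V ⊆ U → U.Nonempty →
    (V = U → M ≤ U.card) → ∀ l : Fin N → ℂ, (∀ j ∈ U, 0 < (l j).im) →
    Phi A U V l ≠ 0 := by
  intro k
  induction k with
  | zero =>
    intro U V hk _ hU _ _ _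
    have := Finset.card_pos.mpr hU
    omega
  | succ k ih =>
    intro U V hk hVU hU hcond l hl
    by_cases hM0 : M = 0
    · subst hM0
      have hD : (Fin.elim0 : Fin 0 → Fin N) ∈ Dfin 0 U V := by
        rw [mem_Dfin]
        exact ⟨fun i => i.elim0, fun j _ => by simp [cnt]⟩
      have h1 : Phi A U V l = ((Dfin 0 U V).card : ℂ) := by
        simp [Phi]
      rw [h1]
      have : 0 < (Dfin 0 U V).card := Finset.card_pos.mpr ⟨_, hD⟩
      exact_mod_cast Nat.pos_iff_ne_zero.mp this
    · by_cases hV : V = ∅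
      · have hD : Dfin M U (∅ : Finset (Fin N)) = Fintype.piFinset (fun _ => U) := by
          ext f
          simp [mem_Dfin, Fintype.mem_piFinset]
        have h2 : Phi A U ∅ l = ∏ i, ∑ u ∈ U, (A i u : ℂ) * l u := by
          rw [Phi, hD]
          exact (Finset.prod_univ_sum (fun _ => U) (fun i u => (A i u : ℂ) * l u)).symm
        rw [hV, h2]
        apply Finset.prod_ne_zero_iff.mpr
        intro i _ h
        have him : (∑ u ∈ U, (A i u : ℂ) * l u).im = ∑ u ∈ U, (A i u) * (l u).im := by
          rw [Complex.im_sum]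
          apply Finset.sum_congr rfl
          intro u _
          simp [Complex.mul_im]
        have hpos : 0 < ∑ u ∈ U, (A i u) * (l u).im :=
          Finset.sum_pos (fun u hu => mul_pos (hA i u) (hl u hu)) hU
        rw [h, Complex.zero_im] at him
        linarith
      · obtain ⟨j, hjV⟩ := Finset.nonempty_iff_ne_empty.mpr hV
        have hjU : j ∈ U := hVU hjV
        by_cases hbase2 : V = U ∧ M = U.card
        · obtain ⟨hVeq, hMcard⟩ := hbase2
          subst hVeq
          have key : ∀ f ∈ Dfin M V V, Function.Injective f ∧ Finset.image f Finset.univ = V := by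
            intro f hf
            rw [mem_Dfin] at hf
            have hinj : Function.Injective f := by
              intro a b hab
              have h1 := hf.2 (f b) (hf.1 b)
              rw [cnt, Finset.card_le_one] at h1
              exact h1 a (by simp [hab]) b (by simp)
            refine ⟨hinj, ?_⟩
            apply Finset.eq_of_subset_of_card_le
            · intro u hu
              simp only [Finset.mem_image] at hu
              obtain ⟨i, _, rfl⟩ := hu
              exact hf.1 i
            · rw [Finset.card_image_of_injective _ hinj, Finset.card_univ, Fintype.card_fin]
              omega
          have h2 : Phi A V V l = (∑ f ∈ Dfin M V V, ∏ i, (A i (f i):ℂ)) * ∏ u ∈ V, l u := by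
            rw [Phi, Finset.sum_mul]
            apply Finset.sum_congr rfl
            intro f hf
            rw [Finset.prod_mul_distrib]
            congr 1
            rw [← (key f hf).2, Finset.prod_image (fun a _ b _ h => (key f hf).1 h)]
          rw [h2]
          apply mul_ne_zero
          · have hcast : (∑ f ∈ Dfin M V V, ∏ i, (A i (f i):ℂ)) =
                ((∑ f ∈ Dfin M V V, ∏ i, A i (f i) : ℝ) : ℂ) := by push_cast; rfl
            rw [hcast, Ne, Complex.ofReal_eq_zero]
            have hpos : 0 < ∑ f ∈ Dfin M V V, ∏ i, A i (f i) := by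
              apply Finset.sum_pos
              · intro f _; exact Finset.prod_pos (fun i _ => hA i (f i))
              · have e : Fin M ≃ {x // x ∈ V} := (finCongr hMcard).trans V.equivFin.symm
                refine ⟨fun i => (e i : Fin N), ?_⟩
                rw [mem_Dfin]
                refine ⟨fun i => (e i).2, fun j _ => ?_⟩
                apply cnt_le_one_of_injective
                intro a b hab
                exact e.injective (Subtype.ext hab)
            linarith
          · apply Finset.prod_ne_zero_iff.mpr
            intro u hu h
            have := hl u (hVU hu)
            rw [h] at this
            simp at this
        · set V' := V.erase j with hV'
          have hjV' : j ∉ V' := Finset.notMem_erase j V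
          have hcardV : V'.card = V.card - 1 := Finset.card_erase_of_mem hjV
          have hVcard_pos : 0 < V.card := Finset.card_pos.mpr ⟨j, hjV⟩
          have haux : (U.erase j).Nonempty ∧ (V' = U.erase j → M ≤ (U.erase j).card) := by
            rcases eq_or_ne V U with hVeq | hVne
            · have hMle := hcond hVeq
              have hMne : M ≠ U.card := fun h => hbase2 ⟨hVeq, h⟩
              have hM1 : 1 ≤ M := Nat.one_le_iff_ne_zero.mpr hM0
              constructor
              · rw [← Finset.card_pos, Finset.card_erase_of_mem hjU]; omega
              · intro _; rw [Finset.card_erase_of_mem hjU]; omega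
            · obtain ⟨u, huU, huV⟩ := Finset.exists_of_ssubset (hVU.ssubset_of_ne hVne)
              have hune : u ≠ j := fun h => huV (h ▸ hjV)
              constructor
              · exact ⟨u, Finset.mem_erase.mpr ⟨hune, huU⟩⟩
              · intro hEq
                exfalso
                apply huV
                have hu2 : u ∈ V' := by rw [hEq]; exact Finset.mem_erase.mpr ⟨hune, huU⟩
                exact Finset.erase_subset _ _ hu2
          obtain ⟨hU2, hcond2⟩ := haux
          have hkU : U.card + V.card ≤ k + 1 := hk
          have IH1 : ∀ w : ℂ, 0 < w.im → Phi A U V' (Function.update l j w) ≠ 0 := by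
            intro w hw
            refine ih U V' (by omega) (fun x hx => hVU (Finset.erase_subset _ _ hx)) hU ?_ _ ?_
            · intro hEq
              exact absurd (by rw [hEq]; exact hjU : j ∈ V') hjV'
            · intro u hu
              rw [Function.update_apply]
              split
              · exact hw
              · exact hl u hu
          have IH2 : Phi A (U.erase j) V' l ≠ 0 := by
            refine ih (U.erase j) V' ?_ (Finset.erase_subset_erase _ hVU) hU2 hcond2 l ?_
            · rw [Finset.card_erase_of_mem hjU]; omega
            · intro u hu; exact hl u (Finset.mem_of_mem_erase hu)
          set c : (Fin M → Fin N) → ℂ :=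
            fun f => ∏ i, (A i (f i) : ℂ) * (if f i = j then 1 else l (f i)) with hc_def
          set fpoly : Polynomial ℂ :=
            ∑ f ∈ Dfin M U V', Polynomial.C (c f) * Polynomial.X ^ (cnt f j) with hfpoly
          have heval : ∀ w : ℂ, fpoly.eval w = Phi A U V' (Function.update l j w) := by
            intro w
            rw [hfpoly, Polynomial.eval_finset_sum, Phi]
            apply Finset.sum_congr rfl
            intro f hf
            rw [Polynomial.eval_mul, Polynomial.eval_C, Polynomial.eval_pow, Polynomial.eval_X]
            rw [hc_def]
            rw [← prod_split A l j f w]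
            apply Finset.prod_congr rfl
            intro i _
            congr 1
            rw [Function.update_apply]
          have hcoeff : ∀ n : ℕ, fpoly.coeff n =
              ∑ f ∈ Dfin M U V', if cnt f j = n then c f else 0 := by
            intro n
            rw [hfpoly, Polynomial.finset_sum_coeff]
            apply Finset.sum_congr rfl
            intro f _
            rw [Polynomial.coeff_C_mul, Polynomial.coeff_X_pow]
            rcases eq_or_ne (cnt f j) n with h | h
            · simp [h]
            · simp [h, Ne.symm h]
          have hb : fpoly.coeff 0 = Phi A (U.erase j) V' l := by
            rw [hcoeff 0, ← Finset.sum_filter, Phi]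
            have hset : (Dfin M U V').filter (fun f => cnt f j = 0) = Dfin M (U.erase j) V' := by
              ext f
              simp only [Finset.mem_filter, mem_Dfin, cnt_eq_zero]
              constructor
              · rintro ⟨⟨h1, h2⟩, h3⟩
                exact ⟨fun i => Finset.mem_erase.mpr ⟨h3 i, h1 i⟩, h2⟩
              · rintro ⟨h1, h2⟩
                exact ⟨⟨fun i => Finset.mem_of_mem_erase (h1 i), h2⟩,
                  fun i => (Finset.mem_erase.mp (h1 i)).1⟩
            rw [hset]
            apply Finset.sum_congr rfl
            intro f hf
            rw [mem_Dfin] at hf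
            rw [hc_def]
            apply Finset.prod_congr rfl
            intro i _
            have hfij : f i ≠ j := (Finset.mem_erase.mp (hf.1 i)).1
            simp [hfij]
          have hDV : Dfin M U V = (Dfin M U V').filter (fun f => cnt f j ≤ 1) := by
            ext f
            simp only [Finset.mem_filter, mem_Dfin]
            constructor
            · rintro ⟨h1, h2⟩
              exact ⟨⟨h1, fun u hu => h2 u (Finset.mem_of_mem_erase hu)⟩, h2 j hjV⟩
            · rintro ⟨⟨h1, h2⟩, h3⟩
              refine ⟨h1, fun u hu => ?_⟩
              rcases eq_or_ne u j with rfl | hne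
              · exact h3
              · exact h2 u (Finset.mem_erase.mpr ⟨hne, hu⟩)
          have hsplit : Phi A U V l = fpoly.coeff 0 + l j * fpoly.coeff 1 := by
            rw [Phi, hDV, Finset.sum_filter, hcoeff 0, hcoeff 1, Finset.mul_sum,
              ← Finset.sum_add_distrib]
            apply Finset.sum_congr rfl
            intro f _
            have hterm : (∏ i, (A i (f i):ℂ) * l (f i)) = c f * (l j) ^ (cnt f j) := by
              rw [hc_def]
              rw [← prod_split A l j f (l j)]
              apply Finset.prod_congr rfl
              intro i _
              congr 1
              split
              · next h => rw [h]
              · rfl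
            rcases hcnt : cnt f j with _ | n
            · simp [hterm, hcnt]
            · rcases n with _ | n
              · simp [hterm, hcnt]
                ring
              · have hgt : ¬ (cnt f j ≤ 1) := by omega
                simp [hterm, hcnt, hgt]
          have hne0 : ∀ w : ℂ, 0 < w.im → fpoly.eval w ≠ 0 := fun w hw => by
            rw [heval w]; exact IH1 w hw
          have h00 : fpoly.coeff 0 ≠ 0 := by rw [hb]; exact IH2
          have hfin := lemU fpoly h00 hne0 (l j) (hl j hjU)
          rw [hsplit]
          exact hfin

private noncomputable def Psi {M N : ℕ} (A : Matrix (Fin M) (Fin N) ℝ) (lam : Fin N → ℝ) : ℝ :=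
  ∑ f ∈ Dfin M Finset.univ Finset.univ, ∏ i, A i (f i) * lam (f i)

private lemma fiber_eq {M N : ℕ} (A : Matrix (Fin M) (Fin N) ℝ) (lam : Fin N → ℝ)
    (S : Finset (Fin N)) (hS : S.card = M) :
    permanent (Matrix.of fun i k => A i ((S.orderIsoOfFin hS) k)) * ∏ j ∈ S, lam j =
      ∑ f ∈ (Dfin M Finset.univ Finset.univ).filter
          (fun f => Finset.image f Finset.univ = S), ∏ i, A i (f i) * lam (f i) := by
  classical
  set ι := S.orderIsoOfFin hS with hι
  have hmemS : ∀ f : Fin M → Fin N, f ∈ (Dfin M Finset.univ Finset.univ).filter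
      (fun f => Finset.image f Finset.univ = S) →
      (∀ i, f i ∈ S) ∧ Function.Injective f := by
    intro f hf
    rw [Finset.mem_filter, mem_Dfin] at hf
    refine ⟨fun i => ?_, inj_of_cnt (fun j => hf.1.2 j (Finset.mem_univ j))⟩
    rw [← hf.2]
    exact Finset.mem_image_of_mem f (Finset.mem_univ i)
  rw [permanent, Finset.sum_mul]
  refine Finset.sum_bij' (i := fun (σ : Equiv.Perm (Fin M)) _ => fun i => ((ι (σ i)) : Fin N))
    (j := fun f hf => Equiv.ofBijective
      (fun i => ι.symm ⟨f i, (hmemS f hf).1 i⟩)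
      (Finite.injective_iff_bijective.mp (fun a b hab => (hmemS f hf).2
        (congrArg (Subtype.val) (ι.symm.injective hab)))))
    ?_ ?_ ?_ ?_ ?_
  · -- hi : image in fiber
    intro σ _
    rw [Finset.mem_filter, mem_Dfin]
    have hinj : Function.Injective (fun i => ((ι (σ i)) : Fin N)) := by
      intro a b hab
      exact σ.injective (ι.injective (Subtype.ext hab))
    refine ⟨⟨fun i => Finset.mem_univ _, fun j _ => cnt_le_one_of_injective hinj j⟩, ?_⟩
    ext u
    simp only [Finset.mem_image, Finset.mem_univ, true_and]
    constructor
    · rintro ⟨i, rfl⟩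
      exact (ι (σ i)).2
    · intro hu
      exact ⟨σ.symm (ι.symm ⟨u, hu⟩), by simp⟩
  · intro f hf
    exact Finset.mem_univ _
  · -- left inverse
    intro σ _
    ext i
    simp [Equiv.ofBijective_apply]
  · -- right inverse
    intro f hf
    funext i
    simp [Equiv.ofBijective_apply]
  · -- values
    intro σ _
    rw [Finset.prod_mul_distrib]
    congr 1
    rw [← Finset.prod_coe_sort S lam,
      ← Equiv.prod_comp ((σ : Equiv.Perm (Fin M)).trans ι.toEquiv) (fun j => lam ↑j)]
    rfl

private lemma FA_eq {M N : ℕ} (A : Matrix (Fin M) (Fin N) ℝ) (lam : Fin N → ℝ) :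
    FA A lam = Psi A lam := by
  classical
  rw [FA, Psi]
  rw [← Finset.sum_fiberwise_of_maps_to (t := Finset.powersetCard M (Finset.univ : Finset (Fin N)))
    (g := fun f : Fin M → Fin N => Finset.image f Finset.univ)
    (fun f hf => by
      rw [mem_Dfin] at hf
      rw [Finset.mem_powersetCard]
      refine ⟨Finset.subset_univ _, ?_⟩
      rw [Finset.card_image_of_injective _ (inj_of_cnt (fun j => hf.2 j (Finset.mem_univ j))),
        Finset.card_univ, Fintype.card_fin])
    (fun f => ∏ i, A i (f i) * lam (f i))]
  rw [← Finset.sum_attach (Finset.powersetCard M (Finset.univ : Finset (Fin N)))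
    (fun S => ∑ f ∈ (Dfin M Finset.univ Finset.univ).filter
      (fun f => Finset.image f Finset.univ = S), ∏ i, A i (f i) * lam (f i))]
  apply Finset.sum_congr rfl
  intro S _
  exact fiber_eq A lam S.1 ((Finset.mem_powersetCard.mp S.2).2)

private lemma Psi_pos {M N : ℕ} (hMN : M ≤ N) (A : Matrix (Fin M) (Fin N) ℝ)
    (hA : ∀ i j, 0 < A i j) (lam : Fin N → ℝ) (hlam : ∀ j, 0 < lam j) :
    0 < Psi A lam := by
  apply Finset.sum_pos
  · intro f _
    exact Finset.prod_pos fun i _ => mul_pos (hA _ _) (hlam _)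
  · refine ⟨Fin.castLE hMN, ?_⟩
    rw [mem_Dfin]
    exact ⟨fun i => Finset.mem_univ _,
      fun j _ => cnt_le_one_of_injective (Fin.castLE_injective hMN) j⟩

private lemma Psi_smul {M N : ℕ} (A : Matrix (Fin M) (Fin N) ℝ) (c : ℝ) (lam : Fin N → ℝ) :
    Psi A (fun j => c * lam j) = c ^ M * Psi A lam := by
  rw [Psi, Psi, Finset.mul_sum]
  apply Finset.sum_congr rfl
  intro f _
  have h : ∀ i : Fin M, A i (f i) * (c * lam (f i)) = c * (A i (f i) * lam (f i)) :=
    fun i => by ring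
  rw [Finset.prod_congr rfl (fun i _ => h i), Finset.prod_mul_distrib, Finset.prod_const,
    Finset.card_univ, Fintype.card_fin]

private lemma mprod_map_nonneg (m : Multiset ℝ) (f : ℝ → ℝ) (h : ∀ a ∈ m, 0 ≤ f a) :
    0 ≤ (m.map f).prod :=
  Multiset.prod_nonneg (by
    intro a ha
    obtain ⟨b, hb, rfl⟩ := Multiset.mem_map.mp ha
    exact h b hb)

private lemma mprod_le_mprod (m : Multiset ℝ) (f g : ℝ → ℝ)
    (h0 : ∀ a ∈ m, 0 ≤ f a) (h1 : ∀ a ∈ m, f a ≤ g a) :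
    (m.map f).prod ≤ (m.map g).prod := by
  induction m using Multiset.induction with
  | empty => simp
  | cons a s ih =>
    simp only [Multiset.map_cons, Multiset.prod_cons]
    have hs0 : ∀ b ∈ s, 0 ≤ f b := fun b hb => h0 b (Multiset.mem_cons_of_mem hb)
    have hs1 : ∀ b ∈ s, f b ≤ g b := fun b hb => h1 b (Multiset.mem_cons_of_mem hb)
    exact mul_le_mul (h1 a (Multiset.mem_cons_self a s)) (ih hs0 hs1)
      (mprod_map_nonneg s f hs0)
      ((h0 a (Multiset.mem_cons_self a s)).trans (h1 a (Multiset.mem_cons_self a s)))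

private lemma mprod_rpow (m : Multiset ℝ) (h : ∀ a ∈ m, 0 ≤ a) (c : ℝ) :
    (m.map (fun a => a ^ c)).prod = m.prod ^ c := by
  induction m using Multiset.induction with
  | empty => simp
  | cons a s ih =>
    simp only [Multiset.map_cons, Multiset.prod_cons]
    rw [ih (fun b hb => h b (Multiset.mem_cons_of_mem hb)),
      ← Real.mul_rpow (h a (Multiset.mem_cons_self a s))
        (Multiset.prod_nonneg (fun b hb => h b (Multiset.mem_cons_of_mem hb)))]

open Polynomial in
private lemma key_pos {M N : ℕ} (hMN : M < N) (A : Matrix (Fin M) (Fin N) ℝ)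
    (hA : ∀ i j, 0 < A i j) (x y : Fin N → ℝ) (hx : ∀ j, 0 < x j) (hy : ∀ j, 0 < y j)
    {t : ℝ} (ht0 : 0 ≤ t) (ht1 : t ≤ 1) :
    Psi A x ^ (1 - t) * Psi A y ^ t ≤ Psi A (fun j => (1 - t) * x j + t * y j) := by
  classical
  have hN0 : 0 < N := lt_of_le_of_lt (Nat.zero_le M) hMN
  have hPsiX := Psi_pos hMN.le A hA x hx
  have hPsiY := Psi_pos hMN.le A hA y hy
  rcases eq_or_lt_of_le ht1 with rfl | htlt
  · have harg : (fun j => (1 - (1:ℝ)) * x j + 1 * y j) = y := by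
      funext j; ring
    rw [harg]
    norm_num
  -- t < 1 from here on
  have h1t : 0 < 1 - t := by linarith
  set s₀ : ℝ := t / (1 - t) with hs₀def
  have hs₀ : 0 ≤ s₀ := div_nonneg ht0 h1t.le
  set P : Polynomial ℝ := ∑ f ∈ Dfin M (Finset.univ : Finset (Fin N)) Finset.univ,
    ∏ i, (C (A i (f i) * x (f i)) + C (A i (f i) * y (f i)) * X) with hPdef
  have heval : ∀ s : ℝ, P.eval s = Psi A (fun j => x j + s * y j) := by
    intro s
    rw [hPdef, Polynomial.eval_finset_sum, Psi]
    apply Finset.sum_congr rfl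
    intro f _
    rw [Polynomial.eval_prod]
    apply Finset.prod_congr rfl
    intro i _
    simp only [Polynomial.eval_add, Polynomial.eval_mul, Polynomial.eval_C, Polynomial.eval_X]
    ring
  have hdeg1 : ∀ a b : ℝ, (C a + C b * X).natDegree ≤ 1 := by
    intro a b
    compute_degree
  have hcoeffM : P.coeff M = Psi A y := by
    rw [hPdef, Polynomial.finset_sum_coeff, Psi]
    apply Finset.sum_congr rfl
    intro f _
    have hcp := Polynomial.coeff_prod_of_natDegree_le Finset.univ
      (fun i => C (A i (f i) * x (f i)) + C (A i (f i) * y (f i)) * X) 1 (fun i _ => hdeg1 _ _)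
    simp only [Finset.card_univ, Fintype.card_fin, mul_one] at hcp
    rw [hcp]
    apply Finset.prod_congr rfl
    intro i _
    simp
  have hPcoeff_ne : P.coeff M ≠ 0 := by rw [hcoeffM]; exact ne_of_gt hPsiY
  have hdegle : P.natDegree ≤ M := by
    rw [hPdef]
    apply Polynomial.natDegree_sum_le_of_forall_le
    intro f _
    refine le_trans (Polynomial.natDegree_prod_le _ _) ?_
    calc ∑ i : Fin M, (C (A i (f i) * x (f i)) + C (A i (f i) * y (f i)) * X).natDegree
        ≤ ∑ _i : Fin M, 1 := by
          apply Finset.sum_le_sum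
          intro i _
          exact hdeg1 _ _
      _ = M := by simp
  have hdeg : P.natDegree = M := le_antisymm hdegle (Polynomial.le_natDegree_of_ne_zero hPcoeff_ne)
  set Pc : Polynomial ℂ := P.map Complex.ofRealHom with hPcdef
  have hPc0 : Pc ≠ 0 := by
    intro h
    apply hPcoeff_ne
    have := Polynomial.coeff_map (p := P) Complex.ofRealHom M
    rw [← hPcdef, h] at this
    simpa using this.symm
  have hdegc : Pc.natDegree = M := by
    rw [hPcdef, Polynomial.natDegree_map_eq_of_injective Complex.ofReal_injective, hdeg]
  have hevalc : ∀ z : ℂ, Pc.eval z =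
      Phi A Finset.univ Finset.univ (fun j => (x j : ℂ) + z * (y j : ℂ)) := by
    intro z
    rw [hPcdef, Polynomial.eval_map, hPdef, Polynomial.eval₂_finset_sum, Phi]
    apply Finset.sum_congr rfl
    intro f _
    rw [Polynomial.eval₂_finset_prod]
    apply Finset.prod_congr rfl
    intro i _
    simp only [Polynomial.eval₂_add, Polynomial.eval₂_mul, Polynomial.eval₂_C,
      Polynomial.eval₂_X, Complex.ofRealHom_eq_coe]
    push_cast
    ring
  have hstab : ∀ z : ℂ, 0 < z.im → Pc.eval z ≠ 0 := by
    intro z hz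
    rw [hevalc]
    refine stab A hA (N + N) Finset.univ Finset.univ (by simp) subset_rfl
      ⟨⟨0, hN0⟩, Finset.mem_univ _⟩
      (fun _ => by rw [Finset.card_univ, Fintype.card_fin]; exact hMN.le) _ ?_
    intro j _
    have him : ((x j : ℂ) + z * (y j : ℂ)).im = z.im * y j := by
      simp [Complex.add_im, Complex.mul_im]
    rw [him]
    exact mul_pos hz (hy j)
  have hconj : ∀ z : ℂ, Pc.eval ((starRingEnd ℂ) z) = (starRingEnd ℂ) (Pc.eval z) := by
    intro z
    rw [hevalc, hevalc, Phi, Phi, map_sum]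
    apply Finset.sum_congr rfl
    intro f _
    rw [map_prod]
    apply Finset.prod_congr rfl
    intro i _
    simp [Complex.conj_ofReal]
  have hrootsreal : ∀ r ∈ Pc.roots, r.im = 0 := by
    intro r hr
    have hroot : Pc.eval r = 0 := (Polynomial.mem_roots hPc0).mp hr
    by_contra him
    rcases lt_or_gt_of_ne him with h | h
    · have h2 : Pc.eval ((starRingEnd ℂ) r) = 0 := by rw [hconj r, hroot, map_zero]
      exact hstab _ (by simpa using neg_pos.mpr h) h2
    · exact hstab r h hroot
  have hsplits : Polynomial.Splits Pc := IsAlgClosed.splits Pc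
  have hcard : Multiset.card Pc.roots = M := by
    rw [← hdegc]
    exact (Polynomial.splits_iff_card_roots).mp hsplits
  set m : Multiset ℝ := Pc.roots.map Complex.re with hmdef
  have hcardm : Multiset.card m = M := by rw [hmdef, Multiset.card_map, hcard]
  have hfac : Pc = C Pc.leadingCoeff *
      (Pc.roots.map (fun a => X - C a)).prod := hsplits.eq_prod_roots
  have hlead : Pc.leadingCoeff = ((Psi A y : ℝ) : ℂ) := by
    rw [Polynomial.leadingCoeff, hdegc, hPcdef, Polynomial.coeff_map, hcoeffM]
    rfl
  have hPeval_real : ∀ u : ℝ, P.eval u = Psi A y * (m.map (fun ρ => u - ρ)).prod := by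
    intro u
    apply Complex.ofReal_injective
    have h1 : Pc.eval ((u : ℝ) : ℂ) = ((P.eval u : ℝ) : ℂ) := by
      rw [hPcdef, Polynomial.eval_map]
      exact Polynomial.eval₂_at_apply Complex.ofRealHom u
    rw [← h1]
    conv_lhs => rw [hfac]
    rw [Polynomial.eval_mul, Polynomial.eval_C, hlead, Polynomial.eval_multiset_prod]
    have h2 : Multiset.map (Polynomial.eval ((u:ℝ):ℂ)) (Multiset.map (fun a => X - C a) Pc.roots)
        = Multiset.map (fun ρ : ℝ => ((ρ : ℝ) : ℂ)) (m.map (fun ρ => u - ρ)) := by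
      rw [Multiset.map_map, hmdef, Multiset.map_map, Multiset.map_map]
      apply Multiset.map_congr rfl
      intro r hr
      simp only [Function.comp_apply, Polynomial.eval_sub, Polynomial.eval_X, Polynomial.eval_C]
      apply Complex.ext
      · simp
      · simp [hrootsreal r hr]
    rw [h2]
    have h4 : (Multiset.map (fun ρ : ℝ => ((ρ:ℝ) : ℂ)) (m.map (fun ρ => u - ρ))).prod
        = (((m.map (fun ρ => u - ρ)).prod : ℝ) : ℂ) := by
      have hph := Multiset.prod_hom (m.map (fun ρ => u - ρ)) Complex.ofRealHom
      simpa [Complex.ofRealHom_eq_coe] using hph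
    rw [h4]
    push_cast
    ring
  have hroots_neg : ∀ ρ ∈ m, ρ < 0 := by
    intro ρ hρ
    by_contra h
    push_neg at h
    have hval : 0 < P.eval ρ := by
      rw [heval ρ]
      exact Psi_pos hMN.le A hA _ (fun j => add_pos_of_pos_of_nonneg (hx j) (mul_nonneg h (hy j).le))
    obtain ⟨r, hr, rfl⟩ := Multiset.mem_map.mp hρ
    have hroot : Pc.eval r = 0 := (Polynomial.mem_roots hPc0).mp hr
    have hreq : r = ((r.re : ℝ) : ℂ) := Complex.ext rfl (by simp [hrootsreal r hr])
    have h1 : Pc.eval ((r.re : ℝ) : ℂ) = ((P.eval r.re : ℝ) : ℂ) := by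
      rw [hPcdef, Polynomial.eval_map]
      exact Polynomial.eval₂_at_apply Complex.ofRealHom r.re
    rw [← hreq, hroot] at h1
    have : P.eval r.re = 0 := by
      have := h1.symm
      exact_mod_cast this
    rw [this] at hval
    exact lt_irrefl 0 hval
  -- main computation
  have hG : Psi A (fun j => (1 - t) * x j + t * y j) =
      Psi A y * (m.map (fun ρ => t - ρ * (1 - t))).prod := by
    have harg : (fun j => (1 - t) * x j + t * y j) = (fun j => (1 - t) * (x j + s₀ * y j)) := by
      funext j
      rw [hs₀def]
      field_simp
    rw [harg, Psi_smul, ← heval s₀, hPeval_real s₀]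
    have hpow : (1 - t) ^ M = (m.map (fun _ => (1 - t))).prod := by
      rw [Multiset.map_const', Multiset.prod_replicate, hcardm]
    rw [hpow, mul_comm ((m.map (fun _ => (1-t))).prod), mul_assoc, ← Multiset.prod_map_mul]
    congr 2
    apply Multiset.map_congr rfl
    intro ρ _
    rw [hs₀def]
    field_simp
  rw [hG]
  have hQpos : ∀ ρ ∈ m, (0:ℝ) < -ρ := fun ρ hρ => neg_pos.mpr (hroots_neg ρ hρ)
  have hineq : (m.map (fun ρ => (-ρ) ^ (1 - t))).prod ≤ (m.map (fun ρ => t - ρ * (1 - t))).prod := by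
    apply mprod_le_mprod
    · intro ρ _
      exact Real.rpow_nonneg (by linarith [hQpos ρ ‹_›]) _
    · intro ρ hρ
      have h := Real.geom_mean_le_arith_mean2_weighted (le_of_lt h1t) ht0
        (le_of_lt (hQpos ρ hρ)) zero_le_one ?_
      · calc (-ρ) ^ (1 - t) = (-ρ) ^ (1-t) * (1:ℝ) ^ t := by rw [Real.one_rpow, mul_one]
          _ ≤ (1 - t) * (-ρ) + t * 1 := h
          _ = t - ρ * (1 - t) := by ring
      · ring
  have hfactor : (m.map (fun ρ => (-ρ) ^ (1 - t))).prod =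
      ((m.map (fun ρ => -ρ)).prod) ^ (1 - t) := by
    have h1 : m.map (fun ρ => (-ρ) ^ (1 - t)) = (m.map (fun ρ => -ρ)).map (fun a => a ^ (1-t)) :=
      (Multiset.map_map (fun a => a ^ (1 - t)) (fun ρ => -ρ) m).symm
    rw [h1, mprod_rpow]
    intro a ha
    obtain ⟨ρ, hρ, rfl⟩ := Multiset.mem_map.mp ha
    exact (hQpos ρ hρ).le
  have hPX : Psi A x = Psi A y * (m.map (fun ρ => -ρ)).prod := by
    have h0 : Psi A x = P.eval 0 := by
      rw [heval 0]
      congr 1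
      funext j
      ring
    rw [h0, hPeval_real 0]
    congr 2
    apply Multiset.map_congr rfl
    intro ρ _
    ring
  set Q : ℝ := (m.map (fun ρ => -ρ)).prod with hQdef
  have hQpos' : 0 < Q := by
    have := hPX
    have hq : Q = Psi A x / Psi A y := by
      rw [hPX]
      field_simp
    rw [hq]
    positivity
  calc Psi A x ^ (1 - t) * Psi A y ^ t
      = (Psi A y * Q) ^ (1 - t) * Psi A y ^ t := by rw [← hPX]
    _ = Psi A y ^ (1 - t) * Q ^ (1 - t) * Psi A y ^ t := by
        rw [Real.mul_rpow hPsiY.le hQpos'.le]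
    _ = (Psi A y ^ (1 - t) * Psi A y ^ t) * Q ^ (1 - t) := by ring
    _ = Psi A y * Q ^ (1 - t) := by
        rw [← Real.rpow_add hPsiY]
        norm_num
    _ = Psi A y * (m.map (fun ρ => (-ρ) ^ (1 - t))).prod := by rw [hfactor]
    _ ≤ Psi A y * (m.map (fun ρ => t - ρ * (1 - t))).prod := by
        exact mul_le_mul_of_nonneg_left hineq hPsiY.le

open scoped Topology in
private lemma key_nonneg {M N : ℕ} (hMN : M < N) (A : Matrix (Fin M) (Fin N) ℝ)
    (hA : ∀ i j, 0 ≤ A i j) (x y : Fin N → ℝ) (hx : ∀ j, 0 ≤ x j) (hy : ∀ j, 0 ≤ y j)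
    {t : ℝ} (ht0 : 0 ≤ t) (ht1 : t ≤ 1) :
    FA A x ^ (1 - t) * FA A y ^ t ≤ FA A (fun j => (1 - t) * x j + t * y j) := by
  rw [FA_eq, FA_eq, FA_eq]
  have hcont : ∀ v : Fin N → ℝ, Continuous
      (fun ε : ℝ => Psi (Matrix.of fun i j => A i j + ε) (fun j => v j + ε)) := by
    intro v
    unfold Psi
    apply continuous_finset_sum
    intro f _
    apply continuous_finset_prod
    intro i _
    exact ((continuous_const.add continuous_id).mul (continuous_const.add continuous_id))
  have hlim : ∀ v : Fin N → ℝ, Filter.Tendsto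
      (fun ε : ℝ => Psi (Matrix.of fun i j => A i j + ε) (fun j => v j + ε))
      (𝓝[>] (0:ℝ)) (𝓝 (Psi A v)) := by
    intro v
    have h0 : Psi (Matrix.of fun i j => A i j + (0:ℝ)) (fun j => v j + (0:ℝ)) = Psi A v := by
      simp only [add_zero]
      rfl
    have h1 : Filter.Tendsto (fun ε : ℝ => Psi (Matrix.of fun i j => A i j + ε) (fun j => v j + ε))
        (𝓝[>] (0:ℝ)) (𝓝 (Psi (Matrix.of fun i j => A i j + (0:ℝ)) (fun j => v j + 0))) :=
      ((hcont v).tendsto 0).mono_left nhdsWithin_le_nhds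
    rwa [h0] at h1
  have hineq : ∀ ε : ℝ, ε ∈ Set.Ioi (0:ℝ) →
      Psi (Matrix.of fun i j => A i j + ε) (fun j => x j + ε) ^ (1 - t) *
        Psi (Matrix.of fun i j => A i j + ε) (fun j => y j + ε) ^ t ≤
      Psi (Matrix.of fun i j => A i j + ε) (fun j => ((1 - t) * x j + t * y j) + ε) := by
    intro ε hε
    rw [Set.mem_Ioi] at hε
    have key := key_pos hMN (Matrix.of fun i j => A i j + ε)
      (fun i j => by have := hA i j; simp only [Matrix.of_apply]; linarith)
      (fun j => x j + ε) (fun j => y j + ε)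
      (fun j => by have := hx j; show 0 < x j + ε; linarith)
      (fun j => by have := hy j; show 0 < y j + ε; linarith) ht0 ht1
    beta_reduce at key
    have harg : (fun j => (1 - t) * (x j + ε) + t * (y j + ε)) =
        (fun j => ((1 - t) * x j + t * y j) + ε) := by
      funext j
      ring
    rwa [harg] at key
  refine le_of_tendsto_of_tendsto
    (((hlim x).rpow_const (Or.inr (by linarith))).mul ((hlim y).rpow_const (Or.inr ht0)))
    (hlim (fun j => (1 - t) * x j + t * y j)) ?_
  exact Filter.eventually_of_mem self_mem_nhdsWithin hineq

theorem stmt0 {M N : ℕ} (hMN : M < N) (A : Matrix (Fin M) (Fin N) ℝ)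
    (hA : ∀ i j, 0 ≤ A i j) :
    ∀ x y : Fin N → ℝ, (∀ j, 0 ≤ x j) → (∀ j, 0 ≤ y j) →
      ∀ t : ℝ, 0 ≤ t → t ≤ 1 →
        (t : EReal) * elog (FA A x) + ((1 - t : ℝ) : EReal) * elog (FA A y) ≤
          elog (FA A (fun j => t * x j + (1 - t) * y j)) := by
  intro x y hx hy t ht0 ht1
  rcases eq_or_lt_of_le ht0 with rfl | ht0'
  · have harg : (fun j => (0:ℝ) * x j + (1 - 0) * y j) = y := by funext j; ring
    rw [harg]
    norm_num
  rcases eq_or_lt_of_le ht1 with rfl | ht1'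
  · have harg : (fun j => (1:ℝ) * x j + (1 - 1) * y j) = x := by funext j; ring
    rw [harg]
    norm_num
  by_cases hFx : 0 < FA A x
  · by_cases hFy : 0 < FA A y
    · have key := key_nonneg hMN A hA y x hy hx (t := t) ht0 ht1
      have harg : (fun j => (1 - t) * y j + t * x j) = (fun j => t * x j + (1 - t) * y j) := by
        funext j; ring
      rw [harg] at key
      have hz0 : 0 < FA A (fun j => t * x j + (1 - t) * y j) :=
        lt_of_lt_of_le (mul_pos (Real.rpow_pos_of_pos hFy _) (Real.rpow_pos_of_pos hFx _)) key
      rw [elog, if_pos hFx, elog, if_pos hFy, elog, if_pos hz0]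
      rw [← EReal.coe_mul, ← EReal.coe_mul, ← EReal.coe_add, EReal.coe_le_coe_iff]
      have hlog := Real.log_le_log
        (mul_pos (Real.rpow_pos_of_pos hFy _) (Real.rpow_pos_of_pos hFx _)) key
      rw [Real.log_mul (ne_of_gt (Real.rpow_pos_of_pos hFy _))
          (ne_of_gt (Real.rpow_pos_of_pos hFx _)),
        Real.log_rpow hFy, Real.log_rpow hFx] at hlog
      linarith
    · have h1 : elog (FA A y) = ⊥ := by rw [elog, if_neg hFy]
      rw [h1]
      have h2 : ((1 - t : ℝ) : EReal) * ⊥ = ⊥ :=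
        EReal.mul_bot_of_pos (EReal.coe_pos.mpr (by linarith))
      rw [h2, EReal.add_bot]
      exact bot_le
  · have h1 : elog (FA A x) = ⊥ := by rw [elog, if_neg hFx]
    rw [h1]
    have h2 : (t : EReal) * ⊥ = ⊥ := EReal.mul_bot_of_pos (EReal.coe_pos.mpr ht0')
    rw [h2, EReal.bot_add]
    exact bot_le
end

section
/- Let p be a homogeneous polynomial of degree n in m variables with nonnegative real coefficients that is H-stable. Then the function (x_1,...,x_m) ↦ log p(x_1,...,x_m) is concave on the nonnegative orthant ℝ_{≥0}^m. -/
/-- A multivariate real polynomial is H-stable if it does not vanish at any point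
all of whose coordinates have positive real part. -/
def Hstable {σ : Type*} (p : MvPolynomial σ ℝ) : Prop :=
  ∀ z : σ → ℂ, (∀ i, 0 < (z i).re) → MvPolynomial.aeval z p ≠ 0

namespace StableAux

open MvPolynomial Polynomial

lemma multiset_prod_nonneg (S : Multiset ℝ) (f : ℝ → ℝ) (h : ∀ a ∈ S, 0 ≤ f a) :
    0 ≤ (S.map f).prod := by
  induction S using Multiset.induction with
  | empty => simp
  | cons a s ih =>
    simp only [Multiset.map_cons, Multiset.prod_cons]
    exact mul_nonneg (h a (Multiset.mem_cons_self a s))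
      (ih fun b hb => h b (Multiset.mem_cons_of_mem hb))

lemma multiset_prod_le_prod (S : Multiset ℝ) (f g : ℝ → ℝ)
    (h : ∀ a ∈ S, 0 ≤ f a ∧ f a ≤ g a) :
    (S.map f).prod ≤ (S.map g).prod := by
  induction S using Multiset.induction with
  | empty => simp
  | cons a s ih =>
    simp only [Multiset.map_cons, Multiset.prod_cons]
    have h1 := h a (Multiset.mem_cons_self a s)
    have h2 : ∀ b ∈ s, 0 ≤ f b ∧ f b ≤ g b := fun b hb => h b (Multiset.mem_cons_of_mem hb)
    have hfp : 0 ≤ (s.map f).prod := multiset_prod_nonneg s f (fun b hb => (h2 b hb).1)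
    exact mul_le_mul h1.2 (ih h2) hfp (le_trans h1.1 h1.2)

lemma multiset_prod_rpow (S : Multiset ℝ) (f : ℝ → ℝ) (h : ∀ a ∈ S, 0 ≤ f a) (c : ℝ) :
    (S.map fun a => f a ^ c).prod = (S.map f).prod ^ c := by
  induction S using Multiset.induction with
  | empty => simp [Real.one_rpow]
  | cons a s ih =>
    simp only [Multiset.map_cons, Multiset.prod_cons]
    have h2 : ∀ b ∈ s, 0 ≤ f b := fun b hb => h b (Multiset.mem_cons_of_mem hb)
    rw [ih h2, ← Real.mul_rpow (h a (Multiset.mem_cons_self a s)) (multiset_prod_nonneg s f h2)]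

lemma multiset_prod_abs (S : Multiset ℝ) (f : ℝ → ℝ) :
    |(S.map f).prod| = (S.map fun a => |f a|).prod := by
  induction S using Multiset.induction with
  | empty => simp
  | cons a s ih =>
    simp only [Multiset.map_cons, Multiset.prod_cons, abs_mul, ih]

lemma eval_nonneg {m : ℕ} (p : MvPolynomial (Fin m) ℝ) (hc : ∀ c, 0 ≤ p.coeff c)
    {w : Fin m → ℝ} (hw : ∀ i, 0 ≤ w i) : 0 ≤ MvPolynomial.eval w p := by
  rw [MvPolynomial.eval_eq]
  exact Finset.sum_nonneg fun d _ =>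
    mul_nonneg (hc d) (Finset.prod_nonneg fun i _ => pow_nonneg (hw i) _)

lemma aeval_mul_pow {m n : ℕ} {p : MvPolynomial (Fin m) ℝ} (hhom : p.IsHomogeneous n)
    (u : ℂ) (z : Fin m → ℂ) :
    MvPolynomial.aeval (fun i => u * z i) p = u ^ n * MvPolynomial.aeval z p := by
  rw [MvPolynomial.aeval_def, MvPolynomial.aeval_def, MvPolynomial.eval₂_eq_eval_map,
    MvPolynomial.eval₂_eq_eval_map]
  set q := MvPolynomial.map (algebraMap ℝ ℂ) p with hq
  rw [MvPolynomial.eval_eq, MvPolynomial.eval_eq, Finset.mul_sum]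
  apply Finset.sum_congr rfl
  intro d hd
  have hne : MvPolynomial.coeff d p ≠ 0 := by
    intro h0
    rw [MvPolynomial.mem_support_iff, hq, MvPolynomial.coeff_map, h0, map_zero] at hd
    exact hd rfl
  have hdeg : ∑ i ∈ d.support, d i = n := by
    have := hhom hne
    rw [← Finsupp.degree_apply, Finsupp.degree_eq_weight_one]; exact this
  have : ∏ i ∈ d.support, (u * z i) ^ d i
      = u ^ n * ∏ i ∈ d.support, z i ^ d i := by
    rw [← hdeg, ← Finset.prod_pow_eq_pow_sum, ← Finset.prod_mul_distrib]
    exact Finset.prod_congr rfl fun i _ => (mul_pow _ _ _)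
  rw [this]; ring

/-- Core real inequality for products of linear factors with roots outside `[0,1]`. -/
lemma core (lc : ℝ) (S : Multiset ℝ) (hS : ∀ ρ ∈ S, ρ < 0 ∨ 1 < ρ)
    (t : ℝ) (ht0 : 0 ≤ t) (ht1 : t ≤ 1)
    (hA : 0 ≤ lc * (S.map (fun ρ => 1 - ρ)).prod)
    (hB : 0 ≤ lc * (S.map (fun ρ => 0 - ρ)).prod)
    (hC : 0 ≤ lc * (S.map (fun ρ => t - ρ)).prod) :
    (lc * (S.map (fun ρ => 1 - ρ)).prod) ^ t * (lc * (S.map (fun ρ => 0 - ρ)).prod) ^ (1 - t)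
      ≤ lc * (S.map (fun ρ => t - ρ)).prod := by
  rcases eq_or_ne lc 0 with h0 | h0
  · simp only [h0, zero_mul]
    rcases eq_or_lt_of_le ht0 with h | h
    · rw [← h]
      rw [Real.rpow_zero, one_mul, sub_zero, Real.rpow_one]
    · rw [Real.zero_rpow (ne_of_gt h), zero_mul]
  · have hlc : 0 < |lc| := abs_pos.2 h0
    have habs : ∀ s : ℝ, |lc * (S.map (fun ρ => s - ρ)).prod|
        = |lc| * (S.map (fun ρ => |s - ρ|)).prod := by
      intro s
      rw [abs_mul, multiset_prod_abs]
    have hA' : lc * (S.map (fun ρ => 1 - ρ)).prod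
        = |lc| * (S.map (fun ρ => |1 - ρ|)).prod := by rw [← habs, abs_of_nonneg hA]
    have hB' : lc * (S.map (fun ρ => 0 - ρ)).prod
        = |lc| * (S.map (fun ρ => |0 - ρ|)).prod := by rw [← habs, abs_of_nonneg hB]
    have hC' : lc * (S.map (fun ρ => t - ρ)).prod
        = |lc| * (S.map (fun ρ => |t - ρ|)).prod := by rw [← habs, abs_of_nonneg hC]
    rw [hA', hB', hC']
    have hprodA : 0 ≤ (S.map (fun ρ => |1 - ρ|)).prod :=
      multiset_prod_nonneg _ _ fun a _ => abs_nonneg _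
    have hprodB : 0 ≤ (S.map (fun ρ => |0 - ρ|)).prod :=
      multiset_prod_nonneg _ _ fun a _ => abs_nonneg _
    rw [Real.mul_rpow (le_of_lt hlc) hprodA, Real.mul_rpow (le_of_lt hlc) hprodB]
    have hlcsplit : |lc| ^ t * |lc| ^ (1 - t) = |lc| := by
      rw [← Real.rpow_add hlc]
      norm_num
    calc |lc| ^ t * (S.map (fun ρ => |1 - ρ|)).prod ^ t
          * (|lc| ^ (1 - t) * (S.map (fun ρ => |0 - ρ|)).prod ^ (1 - t))
        = (|lc| ^ t * |lc| ^ (1 - t)) * ((S.map (fun ρ => |1 - ρ|)).prod ^ t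
            * (S.map (fun ρ => |0 - ρ|)).prod ^ (1 - t)) := by ring
      _ = |lc| * ((S.map (fun ρ => |1 - ρ|)).prod ^ t
            * (S.map (fun ρ => |0 - ρ|)).prod ^ (1 - t)) := by rw [hlcsplit]
      _ = |lc| * (S.map (fun ρ => |1 - ρ| ^ t * |0 - ρ| ^ (1 - t))).prod := by
          rw [Multiset.prod_map_mul,
            multiset_prod_rpow S _ (fun a _ => abs_nonneg _) t,
            multiset_prod_rpow S _ (fun a _ => abs_nonneg _) (1 - t)]
      _ ≤ |lc| * (S.map (fun ρ => |t - ρ|)).prod := by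
          apply mul_le_mul_of_nonneg_left _ (le_of_lt hlc)
          apply multiset_prod_le_prod
          intro ρ hρ
          constructor
          · exact mul_nonneg (Real.rpow_nonneg (abs_nonneg _) _)
              (Real.rpow_nonneg (abs_nonneg _) _)
          · have hgm := Real.geom_mean_le_arith_mean2_weighted ht0 (sub_nonneg.2 ht1)
              (abs_nonneg (1 - ρ)) (abs_nonneg (0 - ρ)) (by ring)
            have heq : |t - ρ| = t * |1 - ρ| + (1 - t) * |0 - ρ| := by
              rcases hS ρ hρ with h | h
              · rw [abs_of_pos (by linarith), abs_of_pos (by linarith),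
                  abs_of_pos (by linarith)]
                ring
              · rw [abs_of_neg (by linarith), abs_of_neg (by linarith),
                  abs_of_neg (by linarith)]
                ring
            rw [heq]
            exact hgm

end StableAux

open MvPolynomial Polynomial StableAux in
/-- Key inequality on the open orthant. -/
lemma key_open {m n : ℕ} (p : MvPolynomial (Fin m) ℝ)
    (hhom : p.IsHomogeneous n) (hcoeff : ∀ c, 0 ≤ p.coeff c) (hstab : Hstable p)
    (x y : Fin m → ℝ) (hx : ∀ i, 0 < x i) (hy : ∀ i, 0 < y i)
    (t : ℝ) (ht0 : 0 ≤ t) (ht1 : t ≤ 1) :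
    (MvPolynomial.eval x p) ^ t * (MvPolynomial.eval y p) ^ (1 - t) ≤
      MvPolynomial.eval (fun i => t * x i + (1 - t) * y i) p := by
  classical
  -- positivity of p at strictly positive points
  have heval_pos : ∀ w : Fin m → ℝ, (∀ i, 0 < w i) → 0 < MvPolynomial.eval w p := by
    intro w hw
    have hne : MvPolynomial.aeval (fun i => ((w i : ℝ) : ℂ)) p ≠ 0 :=
      hstab _ (fun i => by simpa using hw i)
    have hcast : MvPolynomial.aeval (fun i => ((w i : ℝ) : ℂ)) p
        = ((MvPolynomial.eval w p : ℝ) : ℂ) := by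
      have := MvPolynomial.comp_aeval_apply (Algebra.ofId ℝ ℂ) (f := w) p
      simpa [Algebra.ofId_apply, MvPolynomial.aeval_def, MvPolynomial.eval₂_id] using this.symm
    have hne' : MvPolynomial.eval w p ≠ 0 := by
      intro h
      rw [hcast, h] at hne
      simp at hne
    exact lt_of_le_of_ne (eval_nonneg p hcoeff (fun i => le_of_lt (hw i))) (Ne.symm hne')
  set G : Polynomial ℝ :=
    MvPolynomial.aeval (fun i => Polynomial.C (y i) + Polynomial.X * Polynomial.C (x i - y i)) p
    with hGdef
  have hGeval : ∀ s : ℝ, G.eval s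
      = MvPolynomial.eval (fun i => y i + s * (x i - y i)) p := by
    intro s
    have h1 := MvPolynomial.comp_aeval_apply (Polynomial.aeval s : Polynomial ℝ →ₐ[ℝ] ℝ)
      (f := fun i => Polynomial.C (y i) + Polynomial.X * Polynomial.C (x i - y i)) p
    have h2 : (fun i => (Polynomial.aeval s)
        (Polynomial.C (y i) + Polynomial.X * Polynomial.C (x i - y i)))
        = fun i => y i + s * (x i - y i) := by
      funext i; simp
    rw [h2] at h1
    have h3 : (Polynomial.aeval s) G = G.eval s :=
      congrFun (Polynomial.coe_aeval_eq_eval s) G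
    rw [← h3, hGdef, h1, MvPolynomial.aeval_def, Algebra.algebraMap_self, MvPolynomial.eval₂_id]
  have hGC : ∀ s : ℂ, (G.map (algebraMap ℝ ℂ)).eval s
      = MvPolynomial.aeval (fun i => (y i : ℂ) + s * ((x i : ℂ) - (y i : ℂ))) p := by
    intro s
    have h1 := MvPolynomial.comp_aeval_apply (Polynomial.aeval s : Polynomial ℝ →ₐ[ℝ] ℂ)
      (f := fun i => Polynomial.C (y i) + Polynomial.X * Polynomial.C (x i - y i)) p
    have h2 : (fun i => (Polynomial.aeval s)
        (Polynomial.C (y i) + Polynomial.X * Polynomial.C (x i - y i)))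
        = fun i => (y i : ℂ) + s * ((x i : ℂ) - (y i : ℂ)) := by
      funext i
      push_cast [map_add, map_mul, Polynomial.aeval_C, Polynomial.aeval_X]
      norm_num [Complex.coe_algebraMap]
    rw [h2] at h1
    rw [Polynomial.eval_map, ← Polynomial.aeval_def, hGdef, h1]
  -- evaluations at 0, 1, t
  have hG1 : G.eval 1 = MvPolynomial.eval x p := by
    rw [hGeval]
    have h : (fun i => y i + 1 * (x i - y i)) = x := by funext i; ring
    rw [h]
  have hG0 : G.eval 0 = MvPolynomial.eval y p := by
    rw [hGeval]
    have h : (fun i => y i + 0 * (x i - y i)) = y := by funext i; ring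
    rw [h]
  have hGt : G.eval t = MvPolynomial.eval (fun i => t * x i + (1 - t) * y i) p := by
    rw [hGeval]
    have h : (fun i => y i + t * (x i - y i)) = fun i => t * x i + (1 - t) * y i := by
      funext i; ring
    rw [h]
  have hPx : 0 < MvPolynomial.eval x p := heval_pos x hx
  have hPy : 0 < MvPolynomial.eval y p := heval_pos y hy
  have hPt : 0 ≤ MvPolynomial.eval (fun i => t * x i + (1 - t) * y i) p := by
    apply eval_nonneg p hcoeff
    intro i
    exact add_nonneg (mul_nonneg ht0 (hx i).le) (mul_nonneg (by linarith) (hy i).le)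
  have hGne : G ≠ 0 := by
    intro h
    rw [h] at hG1
    simp at hG1
    exact absurd hG1.symm (ne_of_gt hPx)
  -- roots are real and outside [0,1]
  set Gc := G.map (algebraMap ℝ ℂ) with hGc
  have hGcne : Gc ≠ 0 := Polynomial.map_ne_zero hGne
  have hrootchar : ∀ r ∈ Gc.roots, r.im = 0 ∧ (r.re < 0 ∨ 1 < r.re) := by
    intro r hr
    have hroot : Gc.eval r = 0 := by
      have := Polynomial.isRoot_of_mem_roots hr
      exact this
    have hz : MvPolynomial.aeval (fun i => (y i : ℂ) + r * ((x i : ℂ) - (y i : ℂ))) p = 0 := by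
      rw [← hGC]; exact hroot
    by_contra hcon
    push_neg at hcon
    set u : ℂ := if r.im = 0 then 1 else ⟨1, r.re / r.im⟩ with hu
    have hure : u.re = 1 := by
      by_cases him : r.im = 0 <;> simp [hu, him]
    have hB : 0 ≤ (r * u).re ∧ 0 ≤ ((1 - r) * u).re := by
      by_cases him : r.im = 0
      · have hre := hcon him
        simp only [hu, him, if_pos, mul_one, Complex.sub_re, Complex.one_re]
        constructor
        · exact hre.1
        · linarith [hre.2]
      · have h1 : (r * u).re = 0 := by
          simp only [hu, if_neg him, Complex.mul_re]
          field_simp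
          ring
        have h2 : ((1 - r) * u).re = 1 := by
          have : (1 - r) * u = u - r * u := by ring
          rw [this, Complex.sub_re, h1, hure, sub_zero]
        rw [h1, h2]
        norm_num
    have hsum : (r * u).re + ((1 - r) * u).re = 1 := by
      have : r * u + (1 - r) * u = u := by ring
      have h := congrArg Complex.re this
      rw [Complex.add_re] at h
      rw [h, hure]
    have hpos : ∀ i, 0 < (((y i : ℂ) + r * ((x i : ℂ) - (y i : ℂ))) * u).re := by
      intro i
      have hzi : ((y i : ℂ) + r * ((x i : ℂ) - (y i : ℂ))) * u
          = (y i : ℂ) * ((1 - r) * u) + (x i : ℂ) * (r * u) := by ring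
      rw [hzi, Complex.add_re, Complex.re_ofReal_mul, Complex.re_ofReal_mul]
      rcases lt_or_ge 0 ((r * u).re) with h | h
      · have : 0 ≤ y i * ((1 - r) * u).re := mul_nonneg (hy i).le hB.2
        nlinarith [mul_pos (hx i) h]
      · have hB0 : (r * u).re = 0 := le_antisymm h hB.1
        have hA1 : ((1 - r) * u).re = 1 := by rw [hB0] at hsum; linarith
        rw [hA1, hB0]
        simpa using hy i
    have := hstab (fun i => ((y i : ℂ) + r * ((x i : ℂ) - (y i : ℂ))) * u) hpos
    apply this
    have hcomm : (fun i => ((y i : ℂ) + r * ((x i : ℂ) - (y i : ℂ))) * u)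
        = fun i => u * ((y i : ℂ) + r * ((x i : ℂ) - (y i : ℂ))) := by
      funext i; ring
    rw [hcomm, aeval_mul_pow hhom, hz, mul_zero]
  -- factorization
  have hsplit : Gc.Splits :=
    IsAlgClosed.splits Gc
  have hfact := Polynomial.Splits.eq_prod_roots hsplit
  set S : Multiset ℝ := Gc.roots.map Complex.re with hSdef
  have hSmem : ∀ ρ ∈ S, ρ < 0 ∨ 1 < ρ := by
    intro ρ hρ
    rw [hSdef, Multiset.mem_map] at hρ
    obtain ⟨r, hr, rfl⟩ := hρ
    exact (hrootchar r hr).2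
  have hlc : Gc.leadingCoeff = ((G.leadingCoeff : ℝ) : ℂ) := by
    rw [hGc, Polynomial.leadingCoeff_map]
    rfl
  have hGs : ∀ s : ℝ, G.eval s = G.leadingCoeff * (S.map (fun ρ => s - ρ)).prod := by
    intro s
    apply Complex.ofReal_injective
    have h1 : ((G.eval s : ℝ) : ℂ) = Gc.eval ((s : ℝ) : ℂ) := by
      rw [hGc, Polynomial.eval_map]
      exact (Polynomial.eval₂_at_apply (algebraMap ℝ ℂ) s).symm
    rw [h1]
    conv_lhs => rw [hfact]
    rw [Polynomial.eval_mul, Polynomial.eval_C, Polynomial.eval_multiset_prod,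
      Multiset.map_map, hlc]
    have h2 : (Gc.roots.map (Polynomial.eval ((s : ℝ) : ℂ) ∘ fun a => Polynomial.X - Polynomial.C a)).prod
        = (Gc.roots.map fun a => ((s - a.re : ℝ) : ℂ)).prod := by
      congr 1
      apply Multiset.map_congr rfl
      intro a ha
      have him := (hrootchar a ha).1
      simp only [Function.comp_apply, Polynomial.eval_sub, Polynomial.eval_X, Polynomial.eval_C]
      apply Complex.ext <;> simp [him]
    have h3 : (Gc.roots.map fun a => ((s - a.re : ℝ) : ℂ)).prod
        = (((S.map fun ρ => s - ρ).prod : ℝ) : ℂ) := by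
      rw [show ((((S.map fun ρ => s - ρ)).prod : ℝ) : ℂ)
          = Complex.ofRealHom ((S.map fun ρ => s - ρ)).prod from rfl,
        map_multiset_prod, Multiset.map_map, hSdef, Multiset.map_map]
      congr 1
    rw [h2, h3]
    push_cast
    ring
  -- apply the core inequality
  have hA := hGs 1
  have hB := hGs 0
  have hC := hGs t
  rw [hG1] at hA
  rw [hG0] at hB
  rw [hGt] at hC
  rw [hA, hB, hC]
  exact core G.leadingCoeff S hSmem t ht0 ht1 (hA ▸ hPx.le) (hB ▸ hPy.le) (hC ▸ hPt)

open MvPolynomial StableAux in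
/-- Key inequality on the closed orthant, for `t ∈ (0,1)`. -/
lemma key_closed {m n : ℕ} (p : MvPolynomial (Fin m) ℝ)
    (hhom : p.IsHomogeneous n) (hcoeff : ∀ c, 0 ≤ p.coeff c) (hstab : Hstable p)
    (x y : Fin m → ℝ) (hx : ∀ i, 0 ≤ x i) (hy : ∀ i, 0 ≤ y i)
    (t : ℝ) (ht0 : 0 < t) (ht1 : t < 1) :
    (MvPolynomial.eval x p) ^ t * (MvPolynomial.eval y p) ^ (1 - t) ≤
      MvPolynomial.eval (fun i => t * x i + (1 - t) * y i) p := by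
  have hineq : ∀ ε : ℝ, ε ∈ Set.Ioi (0 : ℝ) →
      (MvPolynomial.eval (fun i => x i + ε) p) ^ t
        * (MvPolynomial.eval (fun i => y i + ε) p) ^ (1 - t) ≤
      MvPolynomial.eval (fun i => (t * x i + (1 - t) * y i) + ε) p := by
    intro ε hε
    rw [Set.mem_Ioi] at hε
    have h := key_open p hhom hcoeff hstab (fun i => x i + ε) (fun i => y i + ε)
      (fun i => by show 0 < x i + ε; have := hx i; linarith)
      (fun i => by show 0 < y i + ε; have := hy i; linarith)
      t ht0.le ht1.le
    have hfun : (fun i => t * (x i + ε) + (1 - t) * (y i + ε))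
        = fun i => (t * x i + (1 - t) * y i) + ε := by
      funext i; ring
    rwa [hfun] at h
  have hcont : ∀ w : Fin m → ℝ, Filter.Tendsto
      (fun ε : ℝ => MvPolynomial.eval (fun i => w i + ε) p) (nhdsWithin 0 (Set.Ioi 0))
      (nhds (MvPolynomial.eval w p)) := by
    intro w
    have h1 : Continuous fun ε : ℝ => MvPolynomial.eval (fun i => w i + ε) p := by
      apply (MvPolynomial.continuous_eval p).comp
      exact continuous_pi fun i => continuous_const.add continuous_id
    have h2 := h1.tendsto 0
    simp only [add_zero] at h2
    exact h2.mono_left nhdsWithin_le_nhds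
  have hrg : Filter.Tendsto
      (fun ε : ℝ => MvPolynomial.eval (fun i => (t * x i + (1 - t) * y i) + ε) p)
      (nhdsWithin 0 (Set.Ioi 0))
      (nhds (MvPolynomial.eval (fun i => t * x i + (1 - t) * y i) p)) :=
    hcont _
  have hlf : Filter.Tendsto
      (fun ε : ℝ => (MvPolynomial.eval (fun i => x i + ε) p) ^ t
        * (MvPolynomial.eval (fun i => y i + ε) p) ^ (1 - t))
      (nhdsWithin 0 (Set.Ioi 0))
      (nhds ((MvPolynomial.eval x p) ^ t * (MvPolynomial.eval y p) ^ (1 - t))) := by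
    apply Filter.Tendsto.mul
    · exact ((Real.continuousAt_rpow_const _ t (Or.inr ht0.le)).tendsto).comp (hcont x)
    · exact ((Real.continuousAt_rpow_const _ (1 - t) (Or.inr (by linarith : (0:ℝ) ≤ 1 - t))).tendsto).comp
        (hcont y)
  exact le_of_tendsto_of_tendsto hlf hrg (eventually_nhdsWithin_of_forall hineq)

theorem stmt2 {m n : ℕ} (p : MvPolynomial (Fin m) ℝ)
    (hhom : p.IsHomogeneous n) (hcoeff : ∀ c, 0 ≤ p.coeff c) (hstab : Hstable p) :
    ∀ x y : Fin m → ℝ, (∀ i, 0 ≤ x i) → (∀ i, 0 ≤ y i) →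
      ∀ t : ℝ, 0 ≤ t → t ≤ 1 →
        (t : EReal) * elog (MvPolynomial.eval x p) +
            ((1 - t : ℝ) : EReal) * elog (MvPolynomial.eval y p) ≤
          elog (MvPolynomial.eval (fun i => t * x i + (1 - t) * y i) p) := by
  intro x y hx hy t ht0 ht1
  rcases eq_or_lt_of_le ht0 with h0 | h0
  · -- t = 0
    subst h0
    have hfun : (fun i => (0:ℝ) * x i + (1 - 0) * y i) = y := by funext i; ring
    rw [hfun]
    norm_num
  · rcases eq_or_lt_of_le ht1 with h1 | h1
    · -- t = 1
      subst h1
      have hfun : (fun i => (1:ℝ) * x i + (1 - 1) * y i) = x := by funext i; ring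
      rw [hfun]
      norm_num
    · -- 0 < t < 1
      set Px := MvPolynomial.eval x p with hPx
      set Py := MvPolynomial.eval y p with hPy
      set Pt := MvPolynomial.eval (fun i => t * x i + (1 - t) * y i) p with hPt
      have hPxnn : 0 ≤ Px := StableAux.eval_nonneg p hcoeff hx
      have hPynn : 0 ≤ Py := StableAux.eval_nonneg p hcoeff hy
      have hmain : Px ^ t * Py ^ (1 - t) ≤ Pt :=
        key_closed p hhom hcoeff hstab x y hx hy t h0 h1
      rcases eq_or_lt_of_le hPxnn with hx0 | hx0
      · -- Px = 0
        have : elog Px = ⊥ := by rw [elog, if_neg (by rw [← hx0]; exact lt_irrefl 0)]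
        rw [this, EReal.mul_bot_of_pos (by exact_mod_cast h0), EReal.bot_add]
        exact bot_le
      · rcases eq_or_lt_of_le hPynn with hy0 | hy0
        · -- Py = 0
          have : elog Py = ⊥ := by rw [elog, if_neg (by rw [← hy0]; exact lt_irrefl 0)]
          rw [this, EReal.mul_bot_of_pos (by exact_mod_cast (by linarith : (0:ℝ) < 1 - t)),
            EReal.add_bot]
          exact bot_le
        · -- both positive
          have hPtpos : 0 < Pt := by
            have : 0 < Px ^ t * Py ^ (1 - t) :=
              mul_pos (Real.rpow_pos_of_pos hx0 t) (Real.rpow_pos_of_pos hy0 (1 - t))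
            linarith
          rw [elog, if_pos hx0, elog, if_pos hy0, elog, if_pos hPtpos]
          rw [← EReal.coe_mul, ← EReal.coe_mul, ← EReal.coe_add, EReal.coe_le_coe_iff]
          have hlog : t * Real.log Px + (1 - t) * Real.log Py
              = Real.log (Px ^ t * Py ^ (1 - t)) := by
            rw [Real.log_mul (ne_of_gt (Real.rpow_pos_of_pos hx0 t))
              (ne_of_gt (Real.rpow_pos_of_pos hy0 (1 - t))),
              Real.log_rpow hx0, Real.log_rpow hy0]
          rw [hlog]
          exact Real.log_le_log (mul_pos (Real.rpow_pos_of_pos hx0 t)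
            (Real.rpow_pos_of_pos hy0 (1 - t))) hmain
end

section
/- Let p be a homogeneous polynomial of degree n ≥ 1 in m variables with nonnegative real coefficients that is H-stable. Then the function (x_1,...,x_m) ↦ p(x_1,...,x_m)^{1/n} is concave on the nonnegative orthant ℝ_{≥0}^m. -/
open MvPolynomial
open Polynomial in
lemma coeff_prod'' {R : Type*} [CommSemiring R] {ι : Type*} (s : Finset ι) (g : ι → R[X]) (k : ι → ℕ)
    (h : ∀ i ∈ s, (g i).natDegree ≤ k i) :
    (∏ i ∈ s, g i).coeff (∑ i ∈ s, k i) = ∏ i ∈ s, (g i).coeff (k i) := by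
  induction s using Finset.cons_induction with
  | empty => simp
  | cons a s ha ih =>
    rw [Finset.prod_cons, Finset.sum_cons, Finset.prod_cons,
      Polynomial.coeff_mul_add_eq_of_natDegree_le (h a (Finset.mem_cons_self a s))
        (le_trans (Polynomial.natDegree_prod_le s g) (Finset.sum_le_sum fun i hi => h i (Finset.mem_cons_of_mem hi))),
      ih fun i hi => h i (Finset.mem_cons_of_mem hi)]

noncomputable def slc {m : ℕ} (p : MvPolynomial (Fin m) ℝ) (x y : Fin m → ℝ) : Polynomial ℝ :=
  MvPolynomial.aeval (fun i => Polynomial.C (x i) + Polynomial.C (y i) * Polynomial.X) p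

lemma slc_aeval {m : ℕ} {A : Type*} [CommSemiring A] [Algebra ℝ A]
    (p : MvPolynomial (Fin m) ℝ) (x y : Fin m → ℝ) (z : A) :
    Polynomial.aeval z (slc p x y) = MvPolynomial.aeval (fun i => algebraMap ℝ A (x i) + z * algebraMap ℝ A (y i)) p := by
  rw [slc, MvPolynomial.comp_aeval_apply
    (f := fun i => Polynomial.C (x i) + Polynomial.C (y i) * Polynomial.X)
    (Polynomial.aeval z : Polynomial ℝ →ₐ[ℝ] A)]
  simp [mul_comm z]

lemma slc_eval {m : ℕ} (p : MvPolynomial (Fin m) ℝ) (x y : Fin m → ℝ) (t : ℝ) :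
    (slc p x y).eval t = MvPolynomial.eval (fun i => x i + t * y i) p := by
  have h := slc_aeval (A := ℝ) p x y t
  simpa [Polynomial.aeval_def, MvPolynomial.aeval_def] using h

lemma slc_natDegree {m n : ℕ} (p : MvPolynomial (Fin m) ℝ) (hhom : p.IsHomogeneous n)
    (x y : Fin m → ℝ) : (slc p x y).natDegree ≤ n := by
  rw [slc, MvPolynomial.aeval_def, MvPolynomial.eval₂_eq]
  apply Polynomial.natDegree_sum_le_of_forall_le
  intro d hd
  have hdeg : d.degree = n := by
    by_contra hne
    exact (MvPolynomial.mem_support_iff.1 hd) (hhom.coeff_eq_zero hne)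
  calc (Polynomial.C (MvPolynomial.coeff d p) *
        ∏ i ∈ d.support, (Polynomial.C (x i) + Polynomial.C (y i) * Polynomial.X) ^ d i).natDegree
      ≤ (Polynomial.C (MvPolynomial.coeff d p)).natDegree +
        (∏ i ∈ d.support, (Polynomial.C (x i) + Polynomial.C (y i) * Polynomial.X) ^ d i).natDegree :=
        Polynomial.natDegree_mul_le
    _ ≤ 0 + ∑ i ∈ d.support, d i := by
        gcongr
        · simp
        · apply le_trans (Polynomial.natDegree_prod_le _ _)
          apply Finset.sum_le_sum
          intro i _
          apply le_trans (Polynomial.natDegree_pow_le)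
          have : (Polynomial.C (x i) + Polynomial.C (y i) * Polynomial.X).natDegree ≤ 1 := by
            apply le_trans (Polynomial.natDegree_add_le _ _)
            simp [Polynomial.natDegree_C_mul_le, Polynomial.natDegree_X_le]
            exact le_trans (Polynomial.natDegree_mul_le) (by simp [Polynomial.natDegree_X_le])
          calc (d i) * _ ≤ d i * 1 := by exact Nat.mul_le_mul_left _ this
            _ = d i := by ring
    _ = n := by rw [zero_add, ← hdeg, Finsupp.degree_apply]

lemma slc_coeff_n {m n : ℕ} (p : MvPolynomial (Fin m) ℝ) (hhom : p.IsHomogeneous n)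
    (x y : Fin m → ℝ) : (slc p x y).coeff n = MvPolynomial.eval y p := by
  rw [slc, MvPolynomial.aeval_def, MvPolynomial.eval₂_eq, Polynomial.finset_sum_coeff,
    MvPolynomial.eval_eq]
  apply Finset.sum_congr rfl
  intro d hd
  have hdeg : d.degree = n := by
    by_contra hne
    exact (MvPolynomial.mem_support_iff.1 hd) (hhom.coeff_eq_zero hne)
  have hlin : ∀ i : Fin m, (Polynomial.C (x i) + Polynomial.C (y i) * Polynomial.X).natDegree ≤ 1 := by
    intro i
    apply le_trans (Polynomial.natDegree_add_le _ _)
    simp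
    exact le_trans (Polynomial.natDegree_mul_le) (by simp [Polynomial.natDegree_X_le])
  have hn : n = ∑ i ∈ d.support, d i := by rw [← hdeg, Finsupp.degree_apply]
  rw [show (algebraMap ℝ (Polynomial ℝ)) (MvPolynomial.coeff d p) = Polynomial.C (MvPolynomial.coeff d p) from rfl, Polynomial.coeff_C_mul, hn, coeff_prod'' _ _ _ (fun i _ => le_trans
      (Polynomial.natDegree_pow_le) (by calc (d i) * _ ≤ d i * 1 := Nat.mul_le_mul_left _ (hlin i)
                                            _ = d i := by ring))]
  congr 1
  apply Finset.prod_congr rfl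
  intro i _
  have := Polynomial.coeff_pow_of_natDegree_le (p := Polynomial.C (x i) + Polynomial.C (y i) * Polynomial.X) (n := 1) (m := d i) (hlin i)
  rw [mul_one] at this
  rw [this]
  simp
lemma eval_mul_smul {S : Type*} [CommSemiring S] {σ : Type*} {n : ℕ} (P : MvPolynomial σ S)
    (h : P.IsHomogeneous n) (c : S) (w : σ → S) :
    MvPolynomial.eval (fun i => c * w i) P = c ^ n * MvPolynomial.eval w P := by
  rw [MvPolynomial.eval_eq, MvPolynomial.eval_eq, Finset.mul_sum]
  apply Finset.sum_congr rfl
  intro d hd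
  have hdeg : d.degree = n := by
    by_contra hne
    exact (MvPolynomial.mem_support_iff.1 hd) (h.coeff_eq_zero hne)
  rw [← hdeg, Finsupp.degree_apply]
  simp_rw [mul_pow, Finset.prod_mul_distrib, Finset.prod_pow_eq_pow_sum]
  ring

lemma slc_roots {m n : ℕ} (p : MvPolynomial (Fin m) ℝ) (hhom : p.IsHomogeneous n)
    (hstab : Hstable p) (x y : Fin m → ℝ) (hx : ∀ i, 0 < x i) (hy : ∀ i, 0 < y i)
    (z : ℂ) (hz : Polynomial.aeval z (slc p x y) = 0) : z.im = 0 ∧ z.re ≤ 0 := by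
  rw [slc_aeval] at hz
  set w : Fin m → ℂ := fun i => algebraMap ℝ ℂ (x i) + z * algebraMap ℝ ℂ (y i) with hw
  -- first: z.im = 0
  have him : z.im = 0 := by
    by_contra hne
    rcases lt_or_gt_of_ne hne with hneg | hpos
    · -- z.im < 0, multiply by I
      have : MvPolynomial.aeval (fun i => Complex.I * w i) p = 0 := by
        have hmap : MvPolynomial.aeval (fun i => Complex.I * w i) p
            = MvPolynomial.eval (fun i => Complex.I * w i) (MvPolynomial.map (algebraMap ℝ ℂ) p) := by
          rw [MvPolynomial.aeval_def, ← MvPolynomial.eval_map]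
        rw [hmap, eval_mul_smul _ (hhom.map _), MvPolynomial.eval_map, ← MvPolynomial.aeval_def, hz, mul_zero]
      refine hstab _ ?_ this
      intro i
      simp only [hw, Complex.mul_re, Complex.I_re, Complex.I_im, Complex.add_re, Complex.add_im]
      simp [Complex.mul_im]
      nlinarith [ (hy i), hneg]
    · have : MvPolynomial.aeval (fun i => (-Complex.I) * w i) p = 0 := by
        have hmap : MvPolynomial.aeval (fun i => (-Complex.I) * w i) p
            = MvPolynomial.eval (fun i => (-Complex.I) * w i) (MvPolynomial.map (algebraMap ℝ ℂ) p) := by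
          rw [MvPolynomial.aeval_def, ← MvPolynomial.eval_map]
        rw [hmap, eval_mul_smul _ (hhom.map _), MvPolynomial.eval_map, ← MvPolynomial.aeval_def, hz, mul_zero]
      refine hstab _ ?_ this
      intro i
      simp [hw, Complex.mul_re, Complex.mul_im]
      nlinarith [ (hy i), hpos]
  refine ⟨him, ?_⟩
  by_contra hre
  push_neg at hre
  refine hstab w ?_ hz
  intro i
  simp [hw, Complex.add_re, Complex.mul_re]
  nlinarith [hx i, hy i, hre, him]

lemma eval_nonneg' {m : ℕ} (p : MvPolynomial (Fin m) ℝ) (hcoeff : ∀ c, 0 ≤ p.coeff c)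
    (x : Fin m → ℝ) (hx : ∀ i, 0 ≤ x i) : 0 ≤ MvPolynomial.eval x p := by
  rw [MvPolynomial.eval_eq]
  exact Finset.sum_nonneg fun d _ => mul_nonneg (hcoeff d)
    (Finset.prod_nonneg fun i _ => pow_nonneg (hx i) _)

lemma aeval_ofReal {m : ℕ} (p : MvPolynomial (Fin m) ℝ) (y : Fin m → ℝ) :
    MvPolynomial.aeval (fun i => (y i : ℂ)) p = ((MvPolynomial.eval y p : ℝ) : ℂ) := by
  have h := MvPolynomial.eval₂_comp_left (Complex.ofRealHom) (RingHom.id ℝ) y p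
  rw [MvPolynomial.aeval_def]
  have he : MvPolynomial.eval y p = MvPolynomial.eval₂ (RingHom.id ℝ) y p := rfl
  rw [he]
  rw [show ((eval₂ (RingHom.id ℝ) y p : ℝ) : ℂ) = Complex.ofRealHom (eval₂ (RingHom.id ℝ) y p) from rfl, h]
  rfl

lemma eval_pos' {m : ℕ} (p : MvPolynomial (Fin m) ℝ) (hcoeff : ∀ c, 0 ≤ p.coeff c)
    (hstab : Hstable p) (y : Fin m → ℝ) (hy : ∀ i, 0 < y i) : 0 < MvPolynomial.eval y p := by
  rcases (eval_nonneg' p hcoeff y (fun i => (hy i).le)).lt_or_eq with h | h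
  · exact h
  · exfalso
    apply hstab (fun i => (y i : ℂ)) (fun i => by simpa using hy i)
    rw [aeval_ofReal, ← h]
    simp

lemma slc_factor {m n : ℕ} (p : MvPolynomial (Fin m) ℝ) (hhom : p.IsHomogeneous n)
    (hcoeff : ∀ c, 0 ≤ p.coeff c) (hstab : Hstable p)
    (x y : Fin m → ℝ) (hx : ∀ i, 0 < x i) (hy : ∀ i, 0 < y i) :
    ∃ Λ : Multiset ℝ, Multiset.card Λ = n ∧ (∀ l ∈ Λ, 0 ≤ l) ∧
      ∀ t : ℝ, MvPolynomial.eval (fun i => x i + t * y i) p =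
        MvPolynomial.eval y p * (Λ.map (fun l => t + l)).prod := by
  classical
  set q := slc p x y with hqdef
  set qC := q.map (algebraMap ℝ ℂ) with hqCdef
  have hpy : 0 < MvPolynomial.eval y p := eval_pos' p hcoeff hstab y hy
  have hcoeffn : q.coeff n = MvPolynomial.eval y p := slc_coeff_n p hhom x y
  have hqdeg : q.natDegree = n :=
    le_antisymm (slc_natDegree p hhom x y)
      (Polynomial.le_natDegree_of_ne_zero (by rw [hcoeffn]; exact hpy.ne'))
  have hinj : Function.Injective (algebraMap ℝ ℂ) := (algebraMap ℝ ℂ).injective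
  have hqCdeg : qC.natDegree = n := by
    rw [hqCdef, Polynomial.natDegree_map_eq_of_injective hinj, hqdeg]
  have hlead : qC.leadingCoeff = ((MvPolynomial.eval y p : ℝ) : ℂ) := by
    rw [Polynomial.leadingCoeff, hqCdeg, hqCdef, Polynomial.coeff_map, hcoeffn]
    rfl
  have hsplit : qC.Splits :=
    IsAlgClosed.splits qC
  have hcard : qC.roots.card = n := by
    rw [Polynomial.splits_iff_card_roots.1 hsplit, hqCdeg]
  have hqC0 : qC ≠ 0 := fun h => by
    rw [h] at hlead
    simp only [Polynomial.leadingCoeff_zero] at hlead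
    exact hpy.ne' (by exact_mod_cast hlead.symm)
  have hroots : ∀ z ∈ qC.roots, z.im = 0 ∧ z.re ≤ 0 := by
    intro z hz
    apply slc_roots p hhom hstab x y hx hy
    have : qC.eval z = 0 := (Polynomial.isRoot_of_mem_roots hz)
    rwa [hqCdef, Polynomial.eval_map, ← Polynomial.aeval_def] at this
  have hfac := Polynomial.Splits.eq_prod_roots hsplit
  refine ⟨qC.roots.map (fun z => -z.re), by rw [Multiset.card_map, hcard], ?_, ?_⟩
  · intro l hl
    rcases Multiset.mem_map.1 hl with ⟨z, hz, rfl⟩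
    linarith [(hroots z hz).2]
  · intro t
    have h1 : ((MvPolynomial.eval (fun i => x i + t * y i) p : ℝ) : ℂ) = qC.eval (t : ℂ) := by
      rw [← slc_eval p x y t, ← hqdef, hqCdef, Polynomial.eval_map]
      exact (Polynomial.eval₂_at_apply (algebraMap ℝ ℂ) t).symm
    have h2 : qC.eval (t : ℂ)
        = ((MvPolynomial.eval y p : ℝ) : ℂ) * ((qC.roots.map fun a => (t : ℂ) - a)).prod := by
      conv_lhs => rw [hfac]
      rw [Polynomial.eval_mul, Polynomial.eval_C, hlead, Polynomial.eval_multiset_prod,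
        Multiset.map_map]
      simp
    have h3 : (qC.roots.map fun a => (t : ℂ) - a)
        = (qC.roots.map (fun z => -z.re)).map (fun l => (((t + l : ℝ)) : ℂ)) := by
      rw [Multiset.map_map]
      apply Multiset.map_congr rfl
      intro z hz
      have him := (hroots z hz).1
      simp only [Function.comp_apply]
      rw [show ((t + -z.re : ℝ) : ℂ) = (t : ℂ) + (-z.re : ℝ) by push_cast; ring]
      rw [sub_eq_add_neg]
      congr 1
      apply Complex.ext <;> simp [him]
    have h4 : ((qC.roots.map (fun z => -z.re)).map (fun l => (((t + l : ℝ)) : ℂ))).prod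
        = (((((qC.roots.map (fun z => -z.re)).map (fun l => t + l)).prod : ℝ)) : ℂ) := by
      rw [show (fun l : ℝ => ((t + l : ℝ) : ℂ)) = (fun r : ℝ => (r : ℂ)) ∘ (fun l => t + l) from rfl,
        ← Multiset.map_map]
      exact (map_multiset_prod Complex.ofRealHom _).symm
    apply_fun (fun r : ℝ => (r : ℂ)) using Complex.ofReal_injective
    beta_reduce
    rw [h1, h2, h3, h4]
    push_cast
    ring


lemma geom_superadd_fin {n : ℕ} (hn : 0 < n) (u v : Fin n → ℝ)
    (hu : ∀ i, 0 ≤ u i) (hv : ∀ i, 0 ≤ v i) :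
    (∏ i, u i) ^ ((n : ℝ)⁻¹) + (∏ i, v i) ^ ((n : ℝ)⁻¹) ≤ (∏ i, (u i + v i)) ^ ((n : ℝ)⁻¹) := by
  have hninv : (0:ℝ) < (n : ℝ)⁻¹ := by positivity
  by_cases hzero : ∃ i, u i + v i = 0
  · obtain ⟨i, hi⟩ := hzero
    have hui : u i = 0 := le_antisymm (by linarith [hv i]) (hu i)
    have hvi : v i = 0 := le_antisymm (by linarith [hu i]) (hv i)
    have h1 : (∏ i, u i) = 0 := Finset.prod_eq_zero (Finset.mem_univ i) hui
    have h2 : (∏ i, v i) = 0 := Finset.prod_eq_zero (Finset.mem_univ i) hvi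
    rw [h1, h2, Real.zero_rpow hninv.ne']
    simpa using Real.rpow_nonneg (Finset.prod_nonneg fun j _ => by linarith [hu j, hv j]) _
  push_neg at hzero
  have hpos : ∀ i, 0 < u i + v i := fun i =>
    lt_of_le_of_ne (by linarith [hu i, hv i]) (Ne.symm (hzero i))
  have hSpos : 0 < ∏ i, (u i + v i) := Finset.prod_pos fun i _ => hpos i
  set S := (∏ i, (u i + v i)) ^ ((n : ℝ)⁻¹) with hS
  have hSpos' : 0 < S := Real.rpow_pos_of_pos hSpos _
  have hwsum : ∑ _i : Fin n, (n : ℝ)⁻¹ = 1 := by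
    simp [Finset.card_univ]
    field_simp
  have claim : ∀ w : Fin n → ℝ, (∀ i, 0 ≤ w i) →
      (∏ i, w i) ^ ((n : ℝ)⁻¹) ≤ S * ∑ i, (n : ℝ)⁻¹ * (w i / (u i + v i)) := by
    intro w hw
    have hgm := Real.geom_mean_le_arith_mean_weighted Finset.univ (fun _ => (n : ℝ)⁻¹)
      (fun i => w i / (u i + v i)) (fun i _ => hninv.le) hwsum
      (fun i _ => div_nonneg (hw i) (hpos i).le)
    have hlhs : (∏ i, (w i / (u i + v i)) ^ ((n : ℝ)⁻¹))
        = (∏ i, w i) ^ ((n : ℝ)⁻¹) / S := by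
      calc (∏ i, (w i / (u i + v i)) ^ ((n:ℝ)⁻¹))
          = ∏ i, (w i ^ ((n:ℝ)⁻¹) / (u i + v i) ^ ((n:ℝ)⁻¹)) := by
            apply Finset.prod_congr rfl
            intro i _
            exact Real.div_rpow (hw i) (hpos i).le _
        _ = (∏ i, w i ^ ((n:ℝ)⁻¹)) / (∏ i, (u i + v i) ^ ((n:ℝ)⁻¹)) := Finset.prod_div_distrib _ _
        _ = (∏ i, w i) ^ ((n:ℝ)⁻¹) / S := by
            rw [hS, Real.finset_prod_rpow _ _ (fun i _ => hw i),
              Real.finset_prod_rpow _ _ (fun i _ => (hpos i).le)]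
    rw [hlhs] at hgm
    calc (∏ i, w i) ^ ((n : ℝ)⁻¹) = ((∏ i, w i) ^ ((n : ℝ)⁻¹) / S) * S := by
          field_simp
      _ ≤ (∑ i, (n : ℝ)⁻¹ * (w i / (u i + v i))) * S := by
          apply mul_le_mul_of_nonneg_right hgm hSpos'.le
      _ = S * ∑ i, (n : ℝ)⁻¹ * (w i / (u i + v i)) := by ring
  have hu' := claim u hu
  have hv' := claim v hv
  have hsum : (∑ i, (n : ℝ)⁻¹ * (u i / (u i + v i))) + (∑ i, (n : ℝ)⁻¹ * (v i / (u i + v i))) = 1 := by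
    rw [← Finset.sum_add_distrib, ← hwsum]
    apply Finset.sum_congr rfl
    intro i _
    rw [← mul_add, ← add_div, div_self (hpos i).ne']
    ring
  calc (∏ i, u i) ^ ((n : ℝ)⁻¹) + (∏ i, v i) ^ ((n : ℝ)⁻¹)
      ≤ S * ∑ i, (n : ℝ)⁻¹ * (u i / (u i + v i)) + S * ∑ i, (n : ℝ)⁻¹ * (v i / (u i + v i)) :=
        add_le_add hu' hv'
    _ = S * ((∑ i, (n : ℝ)⁻¹ * (u i / (u i + v i))) + ∑ i, (n : ℝ)⁻¹ * (v i / (u i + v i))) := by ring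
    _ = S := by rw [hsum, mul_one]

lemma list_map_prod_eq {β : Type*} [CommMonoid β] (l : List ℝ) (g : ℝ → β) :
    ((l.map g) : List β).prod = ∏ i : Fin l.length, g l[(i : ℕ)] := by
  rw [← List.ofFn_getElem_eq_map l g, List.prod_ofFn]

lemma geom_superadd {n : ℕ} (hn : 0 < n) (Λ : Multiset ℝ) (hcard : Multiset.card Λ = n)
    (hΛ : ∀ l ∈ Λ, 0 ≤ l) (a b : ℝ) (ha : 0 ≤ a) (hb : 0 ≤ b) :
    a * Λ.prod ^ ((n : ℝ)⁻¹) + b ≤ ((Λ.map fun l => b + a * l).prod) ^ ((n : ℝ)⁻¹) := by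
  obtain ⟨l, rfl⟩ : ∃ l : List ℝ, (↑l : Multiset ℝ) = Λ := ⟨Λ.toList, Multiset.coe_toList Λ⟩
  obtain rfl : l.length = n := by simpa using hcard
  have hl : ∀ i : Fin l.length, 0 ≤ l[(i : ℕ)] := by
    intro i
    exact hΛ _ (by simpa using List.getElem_mem i.2)
  have key := geom_superadd_fin hn (fun i : Fin l.length => a * l[(i : ℕ)]) (fun _ => b)
    (fun i => mul_nonneg ha (hl i)) (fun _ => hb)
  have h1 : (∏ i : Fin l.length, a * l[(i : ℕ)]) = a ^ l.length * (↑l : Multiset ℝ).prod := by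
    rw [Finset.prod_mul_distrib, Finset.prod_const, Finset.card_univ, Fintype.card_fin]
    congr 1
    rw [Multiset.prod_coe]
    simpa using (list_map_prod_eq l id).symm
  have h2 : (∏ _i : Fin l.length, b) = b ^ l.length := by
    rw [Finset.prod_const, Finset.card_univ, Fintype.card_fin]
  have h3 : (∏ i : Fin l.length, (a * l[(i : ℕ)] + b))
      = ((↑l : Multiset ℝ).map fun r => b + a * r).prod := by
    rw [Multiset.map_coe, Multiset.prod_coe, list_map_prod_eq]
    apply Finset.prod_congr rfl
    intro i _
    ring
  rw [h1, h2, h3] at key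
  have hprodnn : (0:ℝ) ≤ (↑l : Multiset ℝ).prod :=
    Multiset.prod_nonneg (by simpa using hΛ)
  rwa [Real.mul_rpow (pow_nonneg ha _) hprodnn, Real.pow_rpow_inv_natCast ha hn.ne',
    Real.pow_rpow_inv_natCast hb hn.ne'] at key

lemma slice_ineq {m n : ℕ} (hn : 1 ≤ n) (p : MvPolynomial (Fin m) ℝ)
    (hhom : p.IsHomogeneous n) (hcoeff : ∀ c, 0 ≤ p.coeff c) (hstab : Hstable p)
    (x y : Fin m → ℝ) (hx : ∀ i, 0 < x i) (hy : ∀ i, 0 < y i)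
    (a b : ℝ) (ha : 0 ≤ a) (hb : 0 ≤ b) (hab : a + b = 1) :
    a * (MvPolynomial.eval x p) ^ ((n : ℝ)⁻¹) + b * (MvPolynomial.eval y p) ^ ((n : ℝ)⁻¹)
      ≤ (MvPolynomial.eval (fun i => a * x i + b * y i) p) ^ ((n : ℝ)⁻¹) := by
  rcases eq_or_lt_of_le ha with rfl | hapos
  · have hb1 : b = 1 := by linarith
    subst hb1
    simp
  obtain ⟨Λ, hcard, hΛ, hfac⟩ := slc_factor p hhom hcoeff hstab x y hx hy
  have hpy : 0 < MvPolynomial.eval y p := eval_pos' p hcoeff hstab y hy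
  set c := (MvPolynomial.eval y p) ^ ((n : ℝ)⁻¹) with hc
  have hcpos : 0 < c := Real.rpow_pos_of_pos hpy _
  -- eval x p
  have hex : MvPolynomial.eval x p = MvPolynomial.eval y p * Λ.prod := by
    have h := hfac 0
    simpa using h
  -- eval (a x + b y) p
  have heab : MvPolynomial.eval (fun i => a * x i + b * y i) p
      = MvPolynomial.eval y p * ((Λ.map fun l => b + a * l).prod) := by
    have h1 : (fun i => a * x i + b * y i) = (fun i => a * (x i + (b / a) * y i)) := by
      funext i
      field_simp
    rw [h1, eval_mul_smul p hhom a, hfac (b / a)]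
    have h2 : (Λ.map fun l => b / a + l) = (Λ.map fun l => (b + a * l) / a) := by
      apply Multiset.map_congr rfl
      intro l _
      field_simp
    rw [h2]
    have h3 : (Λ.map fun l => (b + a * l) / a) = ((Λ.map fun l => b + a * l).map fun r => r / a) := by
      rw [Multiset.map_map]
      rfl
    rw [h3]
    have h4 : ((Λ.map fun l => b + a * l).map fun r => r / a).prod
        = ((Λ.map fun l => b + a * l).prod) / a ^ n := by
      rw [show (fun r : ℝ => r / a) = (fun r : ℝ => r * a⁻¹) from by funext r; rw [div_eq_mul_inv]]
      rw [Multiset.prod_map_mul]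
      simp only [Multiset.map_const', Multiset.prod_replicate, Multiset.card_map, hcard]
      rw [Multiset.map_id']
      rw [div_eq_mul_inv, inv_pow]
    rw [h4]
    field_simp
  have hprodnn : (0:ℝ) ≤ Λ.prod := Multiset.prod_nonneg hΛ
  have hkey := geom_superadd (lt_of_lt_of_le one_pos hn) Λ hcard hΛ a b ha hb
  calc a * (MvPolynomial.eval x p) ^ ((n : ℝ)⁻¹) + b * (MvPolynomial.eval y p) ^ ((n : ℝ)⁻¹)
      = c * (a * Λ.prod ^ ((n : ℝ)⁻¹) + b) := by
        rw [hex, Real.mul_rpow hpy.le hprodnn, hc]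
        ring
    _ ≤ c * ((Λ.map fun l => b + a * l).prod) ^ ((n : ℝ)⁻¹) := by
        apply mul_le_mul_of_nonneg_left hkey hcpos.le
    _ = (MvPolynomial.eval (fun i => a * x i + b * y i) p) ^ ((n : ℝ)⁻¹) := by
        rw [heab, Real.mul_rpow hpy.le (Multiset.prod_nonneg (by
          intro r hr
          rcases Multiset.mem_map.1 hr with ⟨l, hl, rfl⟩
          have := hΛ l hl
          nlinarith))]

theorem stmt3' {m n : ℕ} (hn : 1 ≤ n) (p : MvPolynomial (Fin m) ℝ)
    (hhom : p.IsHomogeneous n) (hcoeff : ∀ c, 0 ≤ p.coeff c) (hstab : Hstable p) :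
    ConcaveOn ℝ {x : Fin m → ℝ | ∀ i, 0 ≤ x i}
      (fun x => (MvPolynomial.eval x p) ^ ((n : ℝ)⁻¹)) := by
  constructor
  · intro x hx y hy a b ha hb hab i
    simp only [Pi.add_apply, Pi.smul_apply, smul_eq_mul]
    have := hx i
    have := hy i
    positivity
  · intro x hx y hy a b ha hb hab
    simp only [smul_eq_mul]
    -- continuity
    have hrc : Continuous (fun t : ℝ => t ^ ((n : ℝ)⁻¹)) :=
      Real.continuous_rpow_const (by positivity)
    have hev : ∀ v : Fin m → ℝ, Continuous (fun ε : ℝ => MvPolynomial.eval (fun i => v i + ε) p) := by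
      intro v
      have h1 : Continuous (fun ε : ℝ => (fun i => v i + ε)) := by
        apply continuous_pi
        intro i
        exact continuous_const.add continuous_id
      exact (MvPolynomial.continuous_eval p).comp h1
    set F : ℝ → ℝ := fun ε =>
      (MvPolynomial.eval (fun i => (a • x + b • y) i + ε) p) ^ ((n : ℝ)⁻¹)
      - a * (MvPolynomial.eval (fun i => x i + ε) p) ^ ((n : ℝ)⁻¹)
      - b * (MvPolynomial.eval (fun i => y i + ε) p) ^ ((n : ℝ)⁻¹) with hF
    have hFcont : Continuous F := by
      apply Continuous.sub
      apply Continuous.sub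
      · exact hrc.comp (hev _)
      · exact continuous_const.mul (hrc.comp (hev x))
      · exact continuous_const.mul (hrc.comp (hev y))
    have hFpos : ∀ ε ∈ Set.Ioi (0:ℝ), 0 ≤ F ε := by
      intro ε hε
      rw [Set.mem_Ioi] at hε
      have hineq := slice_ineq hn p hhom hcoeff hstab (fun i => x i + ε) (fun i => y i + ε)
        (fun i => by show 0 < x i + ε; have h : 0 ≤ x i := hx i; linarith)
        (fun i => by show 0 < y i + ε; have h : 0 ≤ y i := hy i; linarith) a b ha hb hab
      have harg : (fun i => a * (x i + ε) + b * (y i + ε)) = (fun i => (a • x + b • y) i + ε) := by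
        funext i
        simp only [Pi.add_apply, Pi.smul_apply, smul_eq_mul]
        have : a * ε + b * ε = ε := by rw [← add_mul, hab, one_mul]
        ring_nf
        nlinarith [hab]
      rw [harg] at hineq
      simp only [hF]
      linarith
    have hlim : Filter.Tendsto F (nhdsWithin 0 (Set.Ioi 0)) (nhds (F 0)) :=
      (hFcont.continuousAt).continuousWithinAt
    have hF0 : 0 ≤ F 0 := by
      apply ge_of_tendsto hlim
      filter_upwards [self_mem_nhdsWithin] using hFpos
    simp only [hF, add_zero] at hF0
    have e1 : (MvPolynomial.eval (fun i => x i) p) = MvPolynomial.eval x p := rfl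
    have e2 : (MvPolynomial.eval (fun i => y i) p) = MvPolynomial.eval y p := rfl
    have e3 : (MvPolynomial.eval (fun i => (a • x + b • y) i) p) = MvPolynomial.eval (a • x + b • y) p := rfl
    rw [e1, e2, e3] at hF0
    linarith

theorem stmt3 {m n : ℕ} (hn : 1 ≤ n) (p : MvPolynomial (Fin m) ℝ)
    (hhom : p.IsHomogeneous n) (hcoeff : ∀ c, 0 ≤ p.coeff c) (hstab : Hstable p) :
    ConcaveOn ℝ {x : Fin m → ℝ | ∀ i, 0 ≤ x i}
      (fun x => (MvPolynomial.eval x p) ^ ((n : ℝ)⁻¹)) := by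
  exact stmt3' hn p hhom hcoeff hstab
end

section
/- Let p be a homogeneous polynomial of degree n in m variables with nonnegative real coefficients that is H-stable. Then for all real numbers x_1,...,x_m ≥ 0 and all real numbers y_1,...,y_m, one has |p(x_1 + i·y_1, ..., x_m + i·y_m)| ≥ p(x_1,...,x_m). -/
open Polynomial in
lemma coeff_prod_deg {ι : Type*} (s : Finset ι) (f : ι → Polynomial ℂ) (d : ι → ℕ)
    (h : ∀ i ∈ s, (f i).natDegree ≤ d i) :
    (∏ i ∈ s, f i).coeff (∑ i ∈ s, d i) = ∏ i ∈ s, (f i).coeff (d i) := by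
  induction s using Finset.cons_induction with
  | empty => simp
  | cons a s ha ih =>
    rw [Finset.prod_cons, Finset.sum_cons, Finset.prod_cons,
      Polynomial.coeff_mul_add_eq_of_natDegree_le (h a (Finset.mem_cons_self a s))
        ((Polynomial.natDegree_prod_le s f).trans (Finset.sum_le_sum fun i hi => h i (Finset.mem_cons_of_mem hi))),
      ih fun i hi => h i (Finset.mem_cons_of_mem hi)]

lemma one_le_multiset_prod (s : Multiset ℝ) (h : ∀ a ∈ s, 1 ≤ a) : 1 ≤ s.prod := by
  induction s using Multiset.induction_on with
  | empty => simp
  | cons a s ih =>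
    rw [Multiset.prod_cons]
    have ha := h a (Multiset.mem_cons_self a s)
    have hs := ih fun b hb => h b (Multiset.mem_cons_of_mem hb)
    nlinarith

open Polynomial in
lemma key {m n : ℕ} (p : MvPolynomial (Fin m) ℝ)
    (hhom : p.IsHomogeneous n) (hcoeff : ∀ c, 0 ≤ p.coeff c)
    (hstab : ∀ z : Fin m → ℂ, (∀ i, 0 < (z i).re) → MvPolynomial.aeval z p ≠ 0)
    (x y : Fin m → ℝ) (hx : ∀ i, 0 < x i) :
    MvPolynomial.eval x p ≤
      ‖MvPolynomial.aeval (fun i => (x i : ℂ) + (y i : ℂ) * Complex.I) p‖ := by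
  set A : Fin m → Polynomial ℂ := fun i => C (x i : ℂ) * X + C ((y i : ℂ) * Complex.I) with hA
  set R : Polynomial ℂ := MvPolynomial.aeval A p with hR
  have hdegA : ∀ i, (A i).natDegree ≤ 1 := by
    intro i
    have h1 : (C (x i : ℂ) * X).natDegree ≤ 1 :=
      (Polynomial.natDegree_C_mul_le _ _).trans Polynomial.natDegree_X_le
    have h2 : (C ((y i : ℂ) * Complex.I)).natDegree ≤ 1 :=
      le_trans (le_of_eq (Polynomial.natDegree_C _)) zero_le_one
    exact (Polynomial.natDegree_add_le _ _).trans (max_le h1 h2)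
  have hcoeffA1 : ∀ i, (A i).coeff 1 = (x i : ℂ) := by
    intro i; simp [hA]
  have hRrep : R = ∑ d ∈ p.support,
      C ((p.coeff d : ℝ) : ℂ) * ∏ i ∈ d.support, (A i) ^ d i := by
    rw [hR, MvPolynomial.aeval_def, MvPolynomial.eval₂_eq]
    rfl
  have hsupdeg : ∀ d ∈ p.support, ∑ i ∈ d.support, d i = n := by
    intro d hd
    have := hhom (MvPolynomial.mem_support_iff.mp hd)
    simpa [Finsupp.weight_apply, Finsupp.sum] using this
  have hcoeffn : R.coeff n = ((MvPolynomial.eval x p : ℝ) : ℂ) := by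
    rw [hRrep, Polynomial.finset_sum_coeff]
    rw [MvPolynomial.eval_eq]
    push_cast
    refine Finset.sum_congr rfl fun d hd => ?_
    rw [Polynomial.coeff_C_mul, ← hsupdeg d hd,
      coeff_prod_deg _ _ _ (fun i _ => (Polynomial.natDegree_pow_le).trans (by
        simpa using Nat.mul_le_mul_left (d i) (hdegA i)))]
    congr 1
    refine Finset.prod_congr rfl fun i _ => ?_
    have := Polynomial.coeff_pow_of_natDegree_le (p := A i) (n := 1) (m := d i) (hdegA i)
    rw [mul_one] at this
    rw [this, hcoeffA1]
  have hdegR : R.natDegree ≤ n := by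
    rw [hRrep]
    apply Polynomial.natDegree_sum_le_of_forall_le
    intro d hd
    apply (Polynomial.natDegree_mul_le).trans
    simp only [Polynomial.natDegree_C, zero_add]
    apply (Polynomial.natDegree_prod_le _ _).trans
    rw [← hsupdeg d hd]
    exact Finset.sum_le_sum fun i _ => (Polynomial.natDegree_pow_le).trans (by
      simpa using Nat.mul_le_mul_left (d i) (hdegA i))
  have hevalnn : 0 ≤ MvPolynomial.eval x p := by
    rw [MvPolynomial.eval_eq]
    refine Finset.sum_nonneg fun d _ => mul_nonneg (hcoeff d) ?_
    exact Finset.prod_nonneg fun i _ => pow_nonneg (hx i).le (d i)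
  rcases eq_or_lt_of_le hevalnn with h0 | hpos
  · rw [← h0]; exact norm_nonneg _
  -- R has degree n
  have hcn : R.coeff n ≠ 0 := by
    rw [hcoeffn]; exact_mod_cast hpos.ne'
  have hdegR' : R.natDegree = n := le_antisymm hdegR (Polynomial.le_natDegree_of_ne_zero hcn)
  have hRne : R ≠ 0 := fun h => hcn (by simp [h])
  have hcard : R.roots.card = R.natDegree :=
    Polynomial.splits_iff_card_roots.mp (IsAlgClosed.splits R)
  have hfact := Polynomial.C_leadingCoeff_mul_prod_multiset_X_sub_C hcard
  -- roots have nonpositive real part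
  have hroots : ∀ r ∈ R.roots, r.re ≤ 0 := by
    intro r hr
    by_contra hre
    push_neg at hre
    have hev : R.eval r = 0 := (Polynomial.mem_roots hRne).mp hr
    have hcomp := MvPolynomial.comp_aeval_apply
      ((Polynomial.aeval r : Polynomial ℂ →ₐ[ℂ] ℂ).restrictScalars ℝ) p (f := A)
    have hAr : ∀ i, ((Polynomial.aeval r : Polynomial ℂ →ₐ[ℂ] ℂ).restrictScalars ℝ) (A i)
        = (x i : ℂ) * r + (y i : ℂ) * Complex.I := by
      intro i; simp [hA]
    refine hstab (fun i => (x i : ℂ) * r + (y i : ℂ) * Complex.I) (fun i => ?_) ?_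
    · simpa [Complex.add_re, Complex.mul_re] using mul_pos (hx i) hre
    · rw [← funext hAr, ← hcomp]
      simpa [← hR] using hev
  -- evaluation at 1
  have hev1 : MvPolynomial.aeval (fun i => (x i : ℂ) + (y i : ℂ) * Complex.I) p = R.eval 1 := by
    have hcomp := MvPolynomial.comp_aeval_apply
      ((Polynomial.aeval (1 : ℂ) : Polynomial ℂ →ₐ[ℂ] ℂ).restrictScalars ℝ) p (f := A)
    have hA1 : (fun i => ((Polynomial.aeval (1 : ℂ) : Polynomial ℂ →ₐ[ℂ] ℂ).restrictScalars ℝ) (A i))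
        = fun i => (x i : ℂ) + (y i : ℂ) * Complex.I := by
      funext i; simp [hA]
    rw [← hA1, ← hcomp]
    simp [← hR]
  rw [hev1]
  have hlc : R.leadingCoeff = ((MvPolynomial.eval x p : ℝ) : ℂ) := by
    rw [Polynomial.leadingCoeff, hdegR', hcoeffn]
  calc MvPolynomial.eval x p
      = MvPolynomial.eval x p * 1 := (mul_one _).symm
    _ ≤ MvPolynomial.eval x p * (R.roots.map fun r => ‖1 - r‖).prod := by
        refine mul_le_mul_of_nonneg_left ?_ hevalnn
        refine one_le_multiset_prod _ fun t ht => ?_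
        obtain ⟨r, hr, rfl⟩ := Multiset.mem_map.mp ht
        calc (1 : ℝ) ≤ (1 - r).re := by
              simpa [Complex.sub_re] using hroots r hr
          _ ≤ ‖1 - r‖ := Complex.re_le_norm _
    _ = ‖R.eval 1‖ := by
        conv_rhs => rw [← hfact]
        rw [Polynomial.eval_mul, Polynomial.eval_C, Polynomial.eval_multiset_prod, norm_mul,
          (show ∀ s : Multiset ℂ, ‖s.prod‖ = (s.map (‖·‖)).prod from fun s => map_multiset_prod normHom s), hlc, Complex.norm_real, Real.norm_eq_abs, abs_of_nonneg hevalnn,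
          Multiset.map_map, Multiset.map_map]
        congr 2
        exact Multiset.map_congr rfl fun r hr => by simp


theorem stmt4 {m n : ℕ} (p : MvPolynomial (Fin m) ℝ)
    (hhom : p.IsHomogeneous n) (hcoeff : ∀ c, 0 ≤ p.coeff c) (hstab : Hstable p) :
    ∀ x y : Fin m → ℝ, (∀ i, 0 ≤ x i) →
      MvPolynomial.eval x p ≤
        ‖MvPolynomial.aeval
          (fun i => (x i : ℂ) + (y i : ℂ) * Complex.I) p‖ := by
  intro x y hx
  have hle : ∀ ε ∈ Set.Ioi (0 : ℝ),
      MvPolynomial.eval (fun i => x i + ε) p ≤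
        ‖MvPolynomial.aeval
          (fun i => ((x i + ε : ℝ) : ℂ) + (y i : ℂ) * Complex.I) p‖ := by
    intro ε hε
    exact key p hhom hcoeff hstab _ y fun i => add_pos_of_nonneg_of_pos (hx i) hε
  have haeval : ∀ z : Fin m → ℂ, MvPolynomial.aeval z p
      = MvPolynomial.eval z (p.map (algebraMap ℝ ℂ)) := by
    intro z
    rw [MvPolynomial.aeval_def, ← MvPolynomial.eval_map]
  have hL : Filter.Tendsto (fun ε : ℝ => MvPolynomial.eval (fun i => x i + ε) p)
      (nhdsWithin 0 (Set.Ioi 0)) (nhds (MvPolynomial.eval x p)) := by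
    have hc : Continuous fun ε : ℝ => MvPolynomial.eval (fun i => x i + ε) p :=
      (MvPolynomial.continuous_eval p).comp
        (continuous_pi fun i => continuous_const.add continuous_id)
    have := hc.tendsto 0
    simp only [add_zero] at this
    exact this.mono_left nhdsWithin_le_nhds
  have hRt : Filter.Tendsto (fun ε : ℝ => ‖MvPolynomial.aeval
        (fun i => ((x i + ε : ℝ) : ℂ) + (y i : ℂ) * Complex.I) p‖)
      (nhdsWithin 0 (Set.Ioi 0))
      (nhds (‖MvPolynomial.aeval
        (fun i => (x i : ℂ) + (y i : ℂ) * Complex.I) p‖)) := by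
    have hc : Continuous fun ε : ℝ => ‖MvPolynomial.aeval
        (fun i => ((x i + ε : ℝ) : ℂ) + (y i : ℂ) * Complex.I) p‖ := by
      simp only [haeval]
      exact continuous_norm.comp
        ((MvPolynomial.continuous_eval (p.map (algebraMap ℝ ℂ))).comp
        (continuous_pi fun i =>
          (Complex.continuous_ofReal.comp (continuous_const.add continuous_id)).add
            continuous_const))
    have := hc.tendsto 0
    simp only [add_zero] at this
    exact this.mono_left nhdsWithin_le_nhds
  exact le_of_tendsto_of_tendsto hL hRt
    (Filter.eventually_iff_exists_mem.mpr ⟨Set.Ioi 0, self_mem_nhdsWithin, hle⟩)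
end

section
/- Let (p_i)_{i ∈ ℕ} be a sequence of homogeneous polynomials, all of degree n in m variables with nonnegative real coefficients, each of which is H-stable, and suppose the coefficients of p_i converge to those of a polynomial p as i → ∞ (equivalently, p_i(z) → p(z) for every z ∈ ℂ^m). Then p is either identically zero or H-stable. -/
open Polynomial in
lemma coeff_prod_varying {ι R : Type*} [CommSemiring R] (s : Finset ι) (f : ι → R[X]) (d : ι → ℕ)
    (h : ∀ i ∈ s, natDegree (f i) ≤ d i) :
    (∏ i ∈ s, f i).coeff (∑ i ∈ s, d i) = ∏ i ∈ s, (f i).coeff (d i) := by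
  classical
  induction s using Finset.induction with
  | empty => simp
  | @insert a s ha ih =>
    rw [Finset.prod_insert ha, Finset.sum_insert ha, Finset.prod_insert ha,
      coeff_mul_add_eq_of_natDegree_le (h a (Finset.mem_insert_self a s))
        ((natDegree_prod_le _ _).trans (Finset.sum_le_sum fun i hi => h i (Finset.mem_insert_of_mem hi))),
      ih fun i hi => h i (Finset.mem_insert_of_mem hi)]

lemma key_ineq {m n : ℕ} (p : MvPolynomial (Fin m) ℝ) (hhom : p.IsHomogeneous n)
    (hc : ∀ c, 0 ≤ p.coeff c) (hs : Hstable p) (z : Fin m → ℂ) (hz : ∀ j, 0 < (z j).re) :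
    MvPolynomial.eval (fun j => (z j).re) p ≤ ‖MvPolynomial.aeval z p‖ := by
  classical
  set x : Fin m → ℝ := fun j => (z j).re with hx
  set y : Fin m → ℝ := fun j => (z j).im with hy
  -- degree of exponents in support
  have hdeg : ∀ d ∈ p.support, ∑ j, d j = n := by
    intro d hd
    have h1 : d.degree = n := by
      by_contra h
      exact (MvPolynomial.mem_support_iff.mp hd) (hhom.coeff_eq_zero h)
    rw [← h1, Finsupp.degree]
    exact (Finset.sum_subset (Finset.subset_univ _) (fun j _ hj => Finsupp.notMem_support_iff.mp hj)).symm
  -- nonnegativity of eval x p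
  have hxpos : ∀ j, 0 < x j := hz
  have hevnn : 0 ≤ MvPolynomial.eval x p := by
    rw [MvPolynomial.eval_eq']
    refine Finset.sum_nonneg fun d _ => mul_nonneg (hc d) (Finset.prod_nonneg fun j _ =>
      pow_nonneg (hxpos j).le _)
  rcases eq_or_lt_of_le hevnn with h0 | hpos
  · exact le_trans h0.symm.le (norm_nonneg _)
  -- construct the univariate polynomial
  set g : Fin m → Polynomial ℂ := fun j =>
    Polynomial.C (x j : ℂ) * Polynomial.X + Polynomial.C ((y j : ℂ) * Complex.I) with hg
  set f : Polynomial ℂ := MvPolynomial.aeval g p with hf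
  have hgdeg : ∀ j, (g j).natDegree ≤ 1 := by
    intro j
    exact Polynomial.natDegree_linear_le
  -- eval formula
  have heval : ∀ s : ℂ, f.eval s = MvPolynomial.aeval (fun j => (x j : ℂ) * s + (y j : ℂ) * Complex.I) p := by
    intro s
    have := MvPolynomial.comp_aeval_apply (f := g)
      (((Polynomial.aeval s : Polynomial ℂ →ₐ[ℂ] ℂ)).restrictScalars ℝ) p
    have h1 : ∀ u : Polynomial ℂ, ((Polynomial.aeval s : Polynomial ℂ →ₐ[ℂ] ℂ)).restrictScalars ℝ u
        = u.eval s := fun u => by simp [Polynomial.coe_aeval_eq_eval]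
    have h2 : (fun i => ((Polynomial.aeval s : Polynomial ℂ →ₐ[ℂ] ℂ)).restrictScalars ℝ (g i))
        = fun j => (x j : ℂ) * s + (y j : ℂ) * Complex.I := by
      funext j; simp [hg, h1]
    rw [hf, ← h1, this, h2]
  -- expansion of f
  have hfsum : f = ∑ d ∈ p.support, Polynomial.C ((MvPolynomial.coeff d p : ℝ) : ℂ) * ∏ j, (g j) ^ (d j) := by
    rw [hf, MvPolynomial.aeval_def, MvPolynomial.eval₂_eq']
    refine Finset.sum_congr rfl fun d _ => ?_
    rw [Polynomial.algebraMap_apply]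
    norm_num
  have hpowdeg : ∀ (d : Fin m →₀ ℕ) (j : Fin m), ((g j) ^ (d j)).natDegree ≤ d j := fun d j =>
    (Polynomial.natDegree_pow_le).trans (by simpa using Nat.mul_le_mul_left (d j) (hgdeg j))
  have hterm_deg : ∀ d ∈ p.support,
      (Polynomial.C ((MvPolynomial.coeff d p : ℝ) : ℂ) * ∏ j, (g j) ^ (d j)).natDegree ≤ n := by
    intro d hd
    refine (Polynomial.natDegree_C_mul_le _ _).trans ?_
    refine (Polynomial.natDegree_prod_le _ _).trans ?_
    rw [← hdeg d hd]
    exact Finset.sum_le_sum fun j _ => hpowdeg d j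
  have hfdeg : f.natDegree ≤ n := by
    rw [hfsum]; exact Polynomial.natDegree_sum_le_of_forall_le _ _ hterm_deg
  have hg1 : ∀ j, (g j).coeff 1 = (x j : ℂ) := by
    intro j
    simp [hg, Polynomial.coeff_add, Polynomial.coeff_C_mul, Polynomial.coeff_X_one,
      Polynomial.coeff_C]
  have hcoefn : f.coeff n = (MvPolynomial.eval x p : ℂ) := by
    rw [hfsum, Polynomial.finset_sum_coeff, MvPolynomial.eval_eq']
    push_cast
    refine Finset.sum_congr rfl fun d hd => ?_
    rw [Polynomial.coeff_C_mul, ← hdeg d hd,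
      coeff_prod_varying Finset.univ (fun j => (g j) ^ (d j)) (fun j => d j)
        (fun j _ => hpowdeg d j)]
    congr 1
    refine Finset.prod_congr rfl fun j _ => ?_
    have := Polynomial.coeff_pow_of_natDegree_le (hgdeg j) (m := d j)
    rw [mul_one] at this
    rw [this, hg1 j]
  have hfcne : f.coeff n ≠ 0 := by
    rw [hcoefn]
    exact_mod_cast hpos.ne'
  have hndeg : f.natDegree = n :=
    le_antisymm hfdeg (Polynomial.le_natDegree_of_ne_zero hfcne)
  have hfne : f ≠ 0 := fun h => hfcne (by simp [h])
  have hroots : ∀ r ∈ f.roots, r.re ≤ 0 := by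
    intro r hr
    by_contra hre
    push_neg at hre
    have hfr : f.eval r = 0 := (Polynomial.mem_roots hfne).mp hr
    rw [heval r] at hfr
    refine hs (fun j => (x j : ℂ) * r + (y j : ℂ) * Complex.I) (fun j => ?_) hfr
    have : ((x j : ℂ) * r + (y j : ℂ) * Complex.I).re = x j * r.re := by
      simp [Complex.add_re, Complex.mul_re]
    rw [this]
    exact mul_pos (hxpos j) hre
  have hcard : f.roots.card = f.natDegree :=
    Polynomial.splits_iff_card_roots.mp (IsAlgClosed.splits f)
  have hlead : f.leadingCoeff = (MvPolynomial.eval x p : ℂ) := by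
    rw [Polynomial.leadingCoeff, hndeg, hcoefn]
  have hval : f.eval 1 = MvPolynomial.aeval z p := by
    rw [heval 1]
    have hzz : (fun j => (x j : ℂ) * 1 + (y j : ℂ) * Complex.I) = z := by
      funext j; rw [mul_one, hx, hy]; exact Complex.re_add_im (z j)
    rw [hzz]
  have habs : ‖f.eval 1‖
      = (MvPolynomial.eval x p) * (f.roots.map (fun r => ‖1 - r‖)).prod := by
    conv_lhs => rw [← Polynomial.C_leadingCoeff_mul_prod_multiset_X_sub_C hcard]
    rw [Polynomial.eval_mul, Polynomial.eval_C, norm_mul, hlead, Complex.norm_real, Real.norm_eq_abs,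
      abs_of_pos hpos, Polynomial.eval_multiset_prod,
      show ∀ s : Multiset ℂ, ‖s.prod‖ = (s.map norm).prod from fun s => map_multiset_prod (normHom (α := ℂ)) s, Multiset.map_map,
      Multiset.map_map]
    have := Multiset.map_congr (f := (norm ∘ Polynomial.eval 1) ∘ fun a => Polynomial.X - Polynomial.C a)
      (g := fun r => ‖1 - r‖) (rfl : f.roots = f.roots) (fun r _ => by simp)
    rw [this]
  have hprod : 1 ≤ (f.roots.map (fun r => ‖1 - r‖)).prod := by
    refine Multiset.one_le_prod ?_
    intro a ha
    rw [Multiset.mem_map] at ha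
    obtain ⟨r, hr, rfl⟩ := ha
    calc (1 : ℝ) ≤ (1 - r).re := by simp [Complex.sub_re]; linarith [hroots r hr]
    _ ≤ ‖1 - r‖ := Complex.re_le_norm _
  calc MvPolynomial.eval x p = MvPolynomial.eval x p * 1 := (mul_one _).symm
  _ ≤ MvPolynomial.eval x p * (f.roots.map (fun r => ‖1 - r‖)).prod :=
      mul_le_mul_of_nonneg_left hprod hevnn
  _ = ‖f.eval 1‖ := habs.symm
  _ = ‖MvPolynomial.aeval z p‖ := by rw [hval]

theorem stmt6 {m n : ℕ} (p : ℕ → MvPolynomial (Fin m) ℝ) (q : MvPolynomial (Fin m) ℝ)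
    (hhom : ∀ i, (p i).IsHomogeneous n) (hcoeff : ∀ i c, 0 ≤ (p i).coeff c)
    (hstab : ∀ i, Hstable (p i))
    (hconv : ∀ c : Fin m →₀ ℕ,
      Filter.Tendsto (fun i => (p i).coeff c) Filter.atTop (nhds (q.coeff c))) :
    q = 0 ∨ Hstable q := by
  classical
  by_cases hq : q = 0
  · exact Or.inl hq
  refine Or.inr fun z hz => ?_
  intro hz0
  set x : Fin m → ℝ := fun j => (z j).re with hx
  set D : Fin m →₀ ℕ := Finsupp.equivFunOnFinite.symm (fun _ => n) with hD
  set S : Finset (Fin m →₀ ℕ) := Finset.Iic D with hS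
  have hmemS : ∀ (r : MvPolynomial (Fin m) ℝ), r.IsHomogeneous n → r.support ⊆ S := by
    intro r hr c hc
    have hdc : c.degree = n := by
      by_contra h
      exact (MvPolynomial.mem_support_iff.mp hc) (hr.coeff_eq_zero h)
    rw [hS, Finset.mem_Iic]
    intro j
    have h1 : c j ≤ c.degree := by
      rw [Finsupp.degree]
      by_cases hj : j ∈ c.support
      · exact Finset.single_le_sum (fun _ _ => Nat.zero_le _) hj
      · simp [Finsupp.notMem_support_iff.mp hj]
    simpa [hD, hdc] using h1.trans_eq hdc
  have hsuppi : ∀ i, (p i).support ⊆ S := fun i => hmemS _ (hhom i)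
  have hqcoeff : ∀ c, c ∉ S → q.coeff c = 0 := by
    intro c hc
    have h0 : ∀ i, (p i).coeff c = 0 := fun i =>
      MvPolynomial.notMem_support_iff.mp (fun h => hc (hsuppi i h))
    have := hconv c
    simp only [h0] at this
    exact tendsto_nhds_unique this tendsto_const_nhds
  have hqsupp : q.support ⊆ S := fun c hc => by
    by_contra h
    exact (MvPolynomial.mem_support_iff.mp hc) (hqcoeff c h)
  -- evaluation formulas as sums over S
  have hev : ∀ (r : MvPolynomial (Fin m) ℝ), r.support ⊆ S →
      MvPolynomial.aeval z r = ∑ c ∈ S, ((r.coeff c : ℝ) : ℂ) * ∏ j, (z j) ^ (c j) := by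
    intro r hr
    rw [MvPolynomial.aeval_def, MvPolynomial.eval₂_eq']
    refine Finset.sum_subset hr fun c _ hc => ?_
    rw [MvPolynomial.notMem_support_iff.mp hc]
    simp
  have hevR : ∀ (r : MvPolynomial (Fin m) ℝ), r.support ⊆ S →
      MvPolynomial.eval x r = ∑ c ∈ S, (r.coeff c) * ∏ j, (x j) ^ (c j) := by
    intro r hr
    rw [MvPolynomial.eval_eq']
    refine Finset.sum_subset hr fun c _ hc => ?_
    rw [MvPolynomial.notMem_support_iff.mp hc]
    simp
  -- convergence of evaluations
  have htC : Filter.Tendsto (fun i => MvPolynomial.aeval z (p i)) Filter.atTop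
      (nhds (MvPolynomial.aeval z q)) := by
    have heq : ∀ i, MvPolynomial.aeval z (p i)
        = ∑ c ∈ S, (((p i).coeff c : ℝ) : ℂ) * ∏ j, (z j) ^ (c j) := fun i => hev _ (hsuppi i)
    rw [hev q hqsupp]
    simp only [heq]
    refine tendsto_finset_sum _ fun c _ => ?_
    exact (Complex.continuous_ofReal.continuousAt.tendsto.comp (hconv c)).mul tendsto_const_nhds
  have htR : Filter.Tendsto (fun i => MvPolynomial.eval x (p i)) Filter.atTop
      (nhds (MvPolynomial.eval x q)) := by
    have heq : ∀ i, MvPolynomial.eval x (p i)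
        = ∑ c ∈ S, ((p i).coeff c) * ∏ j, (x j) ^ (c j) := fun i => hevR _ (hsuppi i)
    rw [hevR q hqsupp]
    simp only [heq]
    refine tendsto_finset_sum _ fun c _ => ?_
    exact (hconv c).mul tendsto_const_nhds
  -- pass inequality to the limit
  have hineq : ∀ i, MvPolynomial.eval x (p i) ≤ ‖MvPolynomial.aeval z (p i)‖ :=
    fun i => key_ineq (p i) (hhom i) (hcoeff i) (hstab i) z hz
  have habs : Filter.Tendsto (fun i => ‖MvPolynomial.aeval z (p i)‖) Filter.atTop
      (nhds (‖MvPolynomial.aeval z q‖)) :=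
    (continuous_norm.continuousAt.tendsto.comp htC)
  have hle : MvPolynomial.eval x q ≤ ‖MvPolynomial.aeval z q‖ :=
    le_of_tendsto_of_tendsto' htR habs hineq
  rw [hz0, norm_zero] at hle
  -- but eval x q > 0
  have hqnn : ∀ c, 0 ≤ q.coeff c := fun c =>
    le_of_tendsto_of_tendsto' tendsto_const_nhds (hconv c) (fun i => hcoeff i c)
  obtain ⟨c0, hc0⟩ := (MvPolynomial.ne_zero_iff.mp hq)
  have hpos : 0 < MvPolynomial.eval x q := by
    rw [MvPolynomial.eval_eq']
    refine Finset.sum_pos' (fun c _ => mul_nonneg (hqnn c)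
      (Finset.prod_nonneg fun j _ => pow_nonneg (hz j).le _)) ?_
    refine ⟨c0, MvPolynomial.mem_support_iff.mpr hc0, ?_⟩
    exact mul_pos (lt_of_le_of_ne (hqnn c0) (Ne.symm hc0))
      (Finset.prod_pos fun j _ => pow_pos (hz j) _)
  linarith
end

section
/- Let p be a homogeneous polynomial of degree n in m variables (m ≥ 2, n ≥ 1) with nonnegative real coefficients that is H-SStable. Define p_(1)(x_2,...,x_m) = (∂p/∂x_1)(0, x_2, ..., x_m). Then p_(1) is H-SStable; in particular p_(1)(z_2,...,z_m) ≠ 0 whenever Re(z_i) ≥ 0 for 2 ≤ i ≤ m and Σ_{2 ≤ i ≤ m} Re(z_i) > 0. -/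
/-- A multivariate real polynomial is H-SStable if it does not vanish at any point
all of whose coordinates have nonnegative real part, with at least one coordinate of
positive real part. -/
def HSStable {σ : Type*} [Fintype σ] (p : MvPolynomial σ ℝ) : Prop :=
  ∀ z : σ → ℂ, (∀ i, 0 ≤ (z i).re) → 0 < ∑ i, (z i).re →
    MvPolynomial.aeval z p ≠ 0

/-- `p_(1)(x_2,...,x_m) = (∂p/∂x_1)(0, x_2, ..., x_m)`, as a polynomial in one fewer
variable: differentiate in the first variable, then substitute `0` for it. -/
noncomputable def derivFirst {m : ℕ} (p : MvPolynomial (Fin (m + 1)) ℝ) :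
    MvPolynomial (Fin m) ℝ :=
  MvPolynomial.aeval
    (fun i : Fin (m + 1) =>
      Fin.cases (0 : MvPolynomial (Fin m) ℝ) (fun j => MvPolynomial.X j) i)
    (MvPolynomial.pderiv (0 : Fin (m + 1)) p)


open Polynomial in
lemma auxL : ∀ N : ℕ, ∀ f : Polynomial ℂ, f.natDegree ≤ N →
    (∀ w : ℂ, 0 ≤ w.re → f.eval w ≠ 0) →
    0 ≤ ((f.derivative.eval 0) / (f.eval 0)).re := by
  intro N
  induction N with
  | zero =>
    intro f hdeg hf
    rw [f.eq_C_of_natDegree_le_zero hdeg]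
    simp
  | succ N ih =>
    intro f hdeg hf
    by_cases h0 : f.natDegree = 0
    · rw [f.eq_C_of_natDegree_le_zero h0.le]
      simp
    · have hdpos : 0 < f.degree := natDegree_pos_iff_degree_pos.mp (Nat.pos_of_ne_zero h0)
      obtain ⟨r, hr⟩ := Complex.exists_root hdpos
      have hrre : r.re < 0 := by
        by_contra h
        exact hf r (not_lt.mp h) hr
      have hrne : r ≠ 0 := fun h => by simp [h] at hrre
      obtain ⟨g, hg⟩ := dvd_iff_isRoot.mpr hr
      have hfne : f ≠ 0 := fun h => hf 1 (by norm_num) (by simp [h])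
      have hgne : g ≠ 0 := fun h => hfne (by simp [hg, h])
      have hdegg : g.natDegree ≤ N := by
        have h2 := natDegree_mul (X_sub_C_ne_zero r) hgne
        rw [← hg, natDegree_X_sub_C] at h2
        omega
      have hgstab : ∀ w : ℂ, 0 ≤ w.re → g.eval w ≠ 0 := fun w hw hgw =>
        hf w hw (by simp [hg, hgw])
      have ihg := ih g hdegg hgstab
      have hg0 : g.eval 0 ≠ 0 := hgstab 0 le_rfl
      have key : (f.derivative.eval 0) / (f.eval 0)
          = -r⁻¹ + (g.derivative.eval 0) / (g.eval 0) := by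
        rw [hg, derivative_mul]
        simp only [derivative_X_sub_C, one_mul, eval_add, eval_mul, eval_sub, eval_X, eval_C]
        field_simp
        ring
      rw [key, Complex.add_re]
      have hpos : 0 < (-r⁻¹).re := by
        rw [Complex.neg_re, Complex.inv_re]
        have : 0 < Complex.normSq r := Complex.normSq_pos.mpr hrne
        rw [neg_div' ]
        exact div_pos (by linarith) this
      linarith

open Polynomial in
lemma auxPos (f : Polynomial ℂ) (hdeg : 0 < f.natDegree)
    (hf : ∀ w : ℂ, 0 ≤ w.re → f.eval w ≠ 0) :
    0 < ((f.derivative.eval 0) / (f.eval 0)).re := by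
  have hdpos : 0 < f.degree := natDegree_pos_iff_degree_pos.mp hdeg
  obtain ⟨r, hr⟩ := Complex.exists_root hdpos
  have hrre : r.re < 0 := by
    by_contra h
    exact hf r (not_lt.mp h) hr
  have hrne : r ≠ 0 := fun h => by simp [h] at hrre
  obtain ⟨g, hg⟩ := dvd_iff_isRoot.mpr hr
  have hfne : f ≠ 0 := fun h => hf 1 (by norm_num) (by simp [h])
  have hgne : g ≠ 0 := fun h => hfne (by simp [hg, h])
  have hgstab : ∀ w : ℂ, 0 ≤ w.re → g.eval w ≠ 0 := fun w hw hgw =>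
    hf w hw (by simp [hg, hgw])
  have ihg := auxL g.natDegree g le_rfl hgstab
  have hg0 : g.eval 0 ≠ 0 := hgstab 0 le_rfl
  have key : (f.derivative.eval 0) / (f.eval 0)
      = -r⁻¹ + (g.derivative.eval 0) / (g.eval 0) := by
    rw [hg, derivative_mul]
    simp only [derivative_X_sub_C, one_mul, eval_add, eval_mul, eval_sub, eval_X, eval_C]
    field_simp
    ring
  rw [key, Complex.add_re]
  have hpos : 0 < (-r⁻¹).re := by
    rw [Complex.neg_re, Complex.inv_re]
    have : 0 < Complex.normSq r := Complex.normSq_pos.mpr hrne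
    rw [neg_div']
    exact div_pos (by linarith) this
  linarith

theorem stmt8 {m n : ℕ} (hm : 1 ≤ m) (hn : 1 ≤ n) (p : MvPolynomial (Fin (m + 1)) ℝ)
    (hhom : p.IsHomogeneous n) (hcoeff : ∀ c, 0 ≤ p.coeff c) (hstab : HSStable p) :
    HSStable (derivFirst p) := by
  intro z hz hsum
  set g : Fin (m+1) → Polynomial ℂ :=
    fun i => Fin.cases Polynomial.X (fun j => Polynomial.C (z j)) i with hgdef
  set f : Polynomial ℂ := MvPolynomial.aeval g p with hfdef
  -- Claim A
  have evalCons : ∀ (w : ℂ) (q : MvPolynomial (Fin (m+1)) ℝ),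
      (MvPolynomial.aeval g q).eval w = MvPolynomial.aeval (Fin.cons w z) q := by
    intro w q
    have h := MvPolynomial.comp_aeval (R := ℝ)
      (φ := ((Polynomial.aeval w : Polynomial ℂ →ₐ[ℂ] ℂ).restrictScalars ℝ)) (f := g)
    have h2 := congrArg (fun ψ => ψ q) h
    simp only [AlgHom.coe_comp, Function.comp_apply, AlgHom.coe_restrictScalars'] at h2
    have h3 : (fun i => (Polynomial.aeval w : Polynomial ℂ →ₐ[ℂ] ℂ) (g i))
        = Fin.cons w z := by
      funext i
      refine Fin.cases ?_ (fun j => ?_) i <;> simp [hgdef]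
    rw [h3] at h2
    rw [← h2, ← Polynomial.coe_aeval_eq_eval]
  -- Claim B
  have derivEq : ∀ q : MvPolynomial (Fin (m+1)) ℝ,
      MvPolynomial.aeval (Fin.cons (0:ℂ) z) (MvPolynomial.pderiv 0 q)
        = (Polynomial.derivative (MvPolynomial.aeval g q)).eval 0 := by
    intro q
    induction q using MvPolynomial.induction_on with
    | C a => simp
    | add q r hq hr => simp [map_add, hq, hr]
    | mul_X q i hq =>
      have hFq : (MvPolynomial.aeval g q).eval 0 = MvPolynomial.aeval (Fin.cons (0:ℂ) z) q :=
        evalCons 0 q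
      refine Fin.cases ?_ (fun j => ?_) i
      · rw [MvPolynomial.pderiv_mul, MvPolynomial.pderiv_X_self]
        simp only [map_add, map_mul, MvPolynomial.aeval_X, Polynomial.derivative_mul,
          Polynomial.eval_add, Polynomial.eval_mul, map_one, mul_one]
        rw [hgdef] at hq hFq ⊢
        simp [hq, hFq]
      · rw [MvPolynomial.pderiv_mul, MvPolynomial.pderiv_X_of_ne (Fin.succ_ne_zero j)]
        simp only [map_add, map_mul, MvPolynomial.aeval_X, Polynomial.derivative_mul,
          Polynomial.eval_add, Polynomial.eval_mul, map_zero, mul_zero, add_zero]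
        rw [hgdef] at hq ⊢
        simp [hq]
  -- homogeneity facts
  have hsupp : ∀ d ∈ p.support, (d 0 : ℕ) + ∑ j : Fin m, d j.succ = n := by
    intro d hd
    have h1 := hhom (MvPolynomial.mem_support_iff.mp hd)
    have h2 : ∑ i : Fin (m+1), d i = n := by
      rw [← h1, Finsupp.weight_apply, Finsupp.sum]
      simp only [Pi.one_apply, smul_eq_mul, mul_one]
      exact (Finset.sum_subset (Finset.subset_univ _)
        (fun i _ hi => Finsupp.notMem_support_iff.mp hi)).symm
    rw [← h2, Fin.sum_univ_succ]
  have hsingle : ∀ d ∈ p.support, (∀ j : Fin m, d j.succ = 0) → d = Finsupp.single 0 n := by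
    intro d hd h0
    have h1 := hsupp d hd
    rw [Finset.sum_eq_zero (fun j _ => h0 j), add_zero] at h1
    ext i
    refine Fin.cases ?_ (fun j => ?_) i
    · rw [h1, Finsupp.single_eq_same]
    · rw [h0 j, Finsupp.single_eq_of_ne (Fin.succ_ne_zero j)]
  have hd0 : ∀ d ∈ p.support, d 0 = n → d = Finsupp.single 0 n := by
    intro d hd h0
    have h1 := hsupp d hd
    rw [h0] at h1
    have h2 : ∑ j : Fin m, d j.succ = 0 := by omega
    exact hsingle d hd (fun j => by
      have := Finset.sum_eq_zero_iff.mp h2 j (Finset.mem_univ j)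
      exact this)
  have hzero : ∀ j : Fin m, (Finsupp.single (0 : Fin (m+1)) n) j.succ = 0 :=
    fun j => Finsupp.single_eq_of_ne (Fin.succ_ne_zero j)
  -- the product formula
  have prodEq : ∀ d : Fin (m+1) →₀ ℕ,
      (∏ i, g i ^ d i) = Polynomial.C (∏ j : Fin m, z j ^ d j.succ) * Polynomial.X ^ (d 0) := by
    intro d
    rw [Fin.prod_univ_succ, hgdef]
    simp only [Fin.cases_zero, Fin.cases_succ, ← map_pow, ← map_prod]
    ring
  -- coefficient of X^n in f
  have fcoeff : f.coeff n = ((p.coeff (Finsupp.single 0 n) : ℝ) : ℂ) := by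
    rw [hfdef, MvPolynomial.aeval_def, MvPolynomial.eval₂_eq' (algebraMap ℝ (Polynomial ℂ)) g p,
      Polynomial.finset_sum_coeff]
    rw [Finset.sum_eq_single (Finsupp.single 0 n)]
    · rw [prodEq]
      simp [hzero, Polynomial.coeff_C_mul, Polynomial.coeff_X_pow, Polynomial.algebraMap_apply,
        Finsupp.single_eq_same]
    · intro d hd hne
      rw [prodEq]
      have hd0n : d 0 ≠ n := fun h => hne (hd0 d hd h)
      rw [Polynomial.algebraMap_apply, ← mul_assoc, ← Polynomial.C_mul, Polynomial.coeff_C_mul,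
        Polynomial.coeff_X_pow, if_neg (Ne.symm hd0n), mul_zero]
    · intro h
      have : p.coeff (Finsupp.single 0 n) = 0 := MvPolynomial.notMem_support_iff.mp h
      simp [this]
  -- the coefficient of x_1^n in p is nonzero
  have hone : MvPolynomial.aeval (Fin.cons (1:ℂ) (0 : Fin m → ℂ)) p
      = ((p.coeff (Finsupp.single 0 n) : ℝ) : ℂ) := by
    rw [MvPolynomial.aeval_def, MvPolynomial.eval₂_eq' (algebraMap ℝ ℂ) _ p]
    rw [Finset.sum_eq_single (Finsupp.single 0 n)]
    · rw [Fin.prod_univ_succ]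
      simp [hzero, Fin.cons_zero, Fin.cons_succ, Finsupp.single_eq_same]
    · intro d hd hne
      obtain ⟨j, hj⟩ : ∃ j : Fin m, d j.succ ≠ 0 := by
        by_contra h
        push_neg at h
        exact hne (hsingle d hd h)
      have hz0 : ((Fin.cons (1:ℂ) (0 : Fin m → ℂ) : Fin (m+1) → ℂ) j.succ) ^ (d j.succ) = (0:ℂ) := by
        simp [Fin.cons_succ, zero_pow hj]
      rw [Finset.prod_eq_zero (Finset.mem_univ j.succ) hz0, mul_zero]
    · intro h
      have : p.coeff (Finsupp.single 0 n) = 0 := MvPolynomial.notMem_support_iff.mp h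
      simp [this]
  have hcoeffn : p.coeff (Finsupp.single 0 n) ≠ 0 := by
    have h1 : ∀ i, 0 ≤ ((Fin.cons (1:ℂ) (0 : Fin m → ℂ) : Fin (m+1) → ℂ) i).re := by
      intro i
      refine Fin.cases ?_ (fun j => ?_) i <;> simp
    have h2 : 0 < ∑ i, ((Fin.cons (1:ℂ) (0 : Fin m → ℂ) : Fin (m+1) → ℂ) i).re := by
      rw [Fin.sum_univ_succ]
      simp
    have h3 := hstab _ h1 h2
    rw [hone] at h3
    intro h
    rw [h] at h3
    simp at h3
  -- f does not vanish on the closed right half plane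
  have hfstab : ∀ w : ℂ, 0 ≤ w.re → f.eval w ≠ 0 := by
    intro w hw
    rw [evalCons w p]
    apply hstab
    · intro i
      refine Fin.cases ?_ (fun j => ?_) i
      · simpa using hw
      · simpa using hz j
    · rw [Fin.sum_univ_succ]
      simp only [Fin.cons_zero, Fin.cons_succ]
      linarith
  have hfdeg : 0 < f.natDegree := by
    have h1 : f.coeff n ≠ 0 := by
      rw [fcoeff]
      exact_mod_cast hcoeffn
    have h2 := Polynomial.le_natDegree_of_ne_zero h1
    omega
  have hpos := auxPos f hfdeg hfstab
  have hchain : MvPolynomial.aeval z (derivFirst p) = (Polynomial.derivative f).eval 0 := by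
    rw [derivFirst]
    have h := MvPolynomial.comp_aeval (R := ℝ)
      (φ := (MvPolynomial.aeval z : MvPolynomial (Fin m) ℝ →ₐ[ℝ] ℂ))
      (f := fun i : Fin (m+1) =>
        Fin.cases (0 : MvPolynomial (Fin m) ℝ) (fun j => MvPolynomial.X j) i)
    have h2 := congrArg (fun ψ => ψ (MvPolynomial.pderiv (0 : Fin (m+1)) p)) h
    simp only [AlgHom.coe_comp, Function.comp_apply] at h2
    rw [h2]
    have h3 : (fun i : Fin (m+1) => MvPolynomial.aeval z
        (Fin.cases (0 : MvPolynomial (Fin m) ℝ) (fun j => MvPolynomial.X j) i))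
        = Fin.cons (0:ℂ) z := by
      funext i
      refine Fin.cases ?_ (fun j => ?_) i <;> simp
    rw [h3]
    exact derivEq p
  intro hC
  rw [hchain] at hC
  rw [hC] at hpos
  simp at hpos
end
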